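/- arXiv:1906.08241 — 6 statements merged into one kernel-verified Lean document; each statement's English description precedes it below -/
import Mathlib

section
/- Let d be a positive integer, let w = (m, C) with m ∈ ℝ^d and C ∈ ℝ^{d×d}, and let T_w(u) = Cu + m. Viewing w as the vector of all d + d² parameters (the entries of m and of C), let ∇_w T_w(u) denote the (d+d²) × d matrix whose rows are the partial derivatives of T_w(u) with respect to the individual parameters. Then for every u ∈ ℝ^d, (∇_w T_w(u))ᵀ (∇_w T_w(u)) = (1 + ‖u‖₂²) I, where I is the d × d identity matrix. -/
noncomputable section

open MeasureTheory ProbabilityTheory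
open scoped RealInnerProductSpace

/-- The affine reparameterization map `T_w(u) = C u + m`, where the parameter vector
`w ∈ ℝ^{d+d²}` collects the entries of `m` (at indices `Sum.inl i`) and of `C`
(at indices `Sum.inr (i, j)`). -/
def Tmap {d : ℕ} (w : EuclideanSpace ℝ (Fin d ⊕ Fin d × Fin d))
    (u : EuclideanSpace ℝ (Fin d)) : EuclideanSpace ℝ (Fin d) :=
  (WithLp.equiv 2 _).symm fun i => (∑ j, w (Sum.inr (i, j)) * u j) + w (Sum.inl i)

/-- The parameter vector `w = (m, C) ∈ ℝ^{d+d²}`. -/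
def param {d : ℕ} (m : EuclideanSpace ℝ (Fin d)) (C : Matrix (Fin d) (Fin d) ℝ) :
    EuclideanSpace ℝ (Fin d ⊕ Fin d × Fin d) :=
  (WithLp.equiv 2 _).symm (Sum.elim (fun i => m i) fun p => C p.1 p.2)

def Tclm {d : ℕ} (u : EuclideanSpace ℝ (Fin d)) (i : Fin d) :
    EuclideanSpace ℝ (Fin d ⊕ Fin d × Fin d) →L[ℝ] ℝ :=
  (∑ j, u j • (EuclideanSpace.proj (Sum.inr (i, j)) :
      EuclideanSpace ℝ (Fin d ⊕ Fin d × Fin d) →L[ℝ] ℝ)) +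
    EuclideanSpace.proj (Sum.inl i)

lemma Tclm_apply {d : ℕ} (u : EuclideanSpace ℝ (Fin d)) (i : Fin d)
    (w : EuclideanSpace ℝ (Fin d ⊕ Fin d × Fin d)) :
    Tclm u i w = Tmap w u i := by
  simp [Tclm, Tmap, ContinuousLinearMap.sum_apply, mul_comm, WithLp.equiv, Equiv.refl_apply]

lemma fderiv_Tmap {d : ℕ} (u : EuclideanSpace ℝ (Fin d)) (i : Fin d)
    (w : EuclideanSpace ℝ (Fin d ⊕ Fin d × Fin d)) :
    fderiv ℝ (fun w' => Tmap w' u i) w = Tclm u i := by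
  have : (fun w' : EuclideanSpace ℝ (Fin d ⊕ Fin d × Fin d) => Tmap w' u i)
      = Tclm u i := by
    funext w'; exact (Tclm_apply u i w').symm
  rw [this]
  exact (Tclm u i).fderiv

/-- the Jacobian `J` of `w ↦ T_w(u)` (rows indexed by the `d + d²` parameters)
satisfies `Jᵀ J = (1 + ‖u‖₂²) I`. -/
theorem stmt_0 (d : ℕ) (hd : 0 < d) (u : EuclideanSpace ℝ (Fin d))
    (w : EuclideanSpace ℝ (Fin d ⊕ Fin d × Fin d))
    (J : Matrix (Fin d ⊕ Fin d × Fin d) (Fin d) ℝ)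
    (hJ : ∀ p i, J p i =
      fderiv ℝ (fun w' => Tmap w' u i) w (EuclideanSpace.single p 1)) :
    J.transpose * J = (1 + ‖u‖ ^ 2) • (1 : Matrix (Fin d) (Fin d) ℝ) := by
  have hJ' : ∀ p i, J p i = Tclm u i (EuclideanSpace.single p 1) := by
    intro p i; rw [hJ p i, fderiv_Tmap]
  have hinl : ∀ i' i, J (Sum.inl i') i = if i = i' then 1 else 0 := by
    intro i' i
    rw [hJ']
    simp [Tclm, ContinuousLinearMap.sum_apply, EuclideanSpace.single_apply]
  have hinr : ∀ i' j i, J (Sum.inr (i', j)) i = if i = i' then u j else 0 := by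
    intro i' j i
    rw [hJ']
    simp only [Tclm, ContinuousLinearMap.add_apply, ContinuousLinearMap.sum_apply, PiLp.proj_apply,
      ContinuousLinearMap.smul_apply,
      EuclideanSpace.single_apply]
    rcases eq_or_ne i i' with h | h
    · subst h
      simp [Finset.sum_ite_eq', mul_comm]
    · have : ∀ j' : Fin d, (Sum.inr (i', j) : Fin d ⊕ Fin d × Fin d) ≠ Sum.inr (i, j') := by
        intro j'
        simp [Prod.ext_iff]
        intro hh; exact absurd hh.symm h
      simp [this, h]
  have hnorm : ‖u‖ ^ 2 = ∑ j, u j * u j := by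
    rw [EuclideanSpace.norm_eq, Real.sq_sqrt (Finset.sum_nonneg fun j _ => sq_nonneg _)]
    simp [sq]
  ext i k
  simp only [Matrix.mul_apply, Matrix.transpose_apply, Matrix.smul_apply,
    Matrix.one_apply, Fintype.sum_sum_type, Fintype.sum_prod_type, hinl, hinr]
  by_cases h : i = k
  · subst h
    simp [hnorm]
  · simp [h, Ne.symm h]
end
end

section
/- Let d be a positive integer, let f : ℝ^d → ℝ be differentiable, let w = (m, C) with m ∈ ℝ^d and C ∈ ℝ^{d×d}, and let T_w(u) = Cu + m. Then for every u ∈ ℝ^d, the squared Euclidean norm of the gradient of the map w ↦ f(T_w(u)) with respect to all d + d² parameters (entries of m and C) equals ‖∇f(T_w(u))‖₂² · (1 + ‖u‖₂²), where ∇f is the gradient of f on ℝ^d. -/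
noncomputable section

open MeasureTheory ProbabilityTheory
open scoped RealInnerProductSpace

/-- `Tmap · u` as a linear map in `w`. -/
def Tlin {d : ℕ} (u : EuclideanSpace ℝ (Fin d)) :
    EuclideanSpace ℝ (Fin d ⊕ Fin d × Fin d) →ₗ[ℝ] EuclideanSpace ℝ (Fin d) where
  toFun w := Tmap w u
  map_add' x y := by
    ext i
    simp [Tmap, Finset.sum_add_distrib, add_mul]
    ring
  map_smul' c x := by
    ext i
    simp [Tmap, Finset.mul_sum, mul_add, mul_assoc]

/-- for differentiable `f`, the squared norm of the gradient of
`w ↦ f(T_w(u))` with respect to all `d + d²` parameters equals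
`‖∇f(T_w(u))‖₂² (1 + ‖u‖₂²)`. -/
theorem stmt_1 (d : ℕ) (hd : 0 < d) (f : EuclideanSpace ℝ (Fin d) → ℝ)
    (hf : Differentiable ℝ f)
    (w : EuclideanSpace ℝ (Fin d ⊕ Fin d × Fin d)) (u : EuclideanSpace ℝ (Fin d)) :
    ‖gradient (fun w' => f (Tmap w' u)) w‖ ^ 2
      = ‖gradient f (Tmap w u)‖ ^ 2 * (1 + ‖u‖ ^ 2) := by
  classical
  set L : EuclideanSpace ℝ (Fin d ⊕ Fin d × Fin d) →L[ℝ] EuclideanSpace ℝ (Fin d) :=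
    (Tlin u).toContinuousLinearMap with hL
  set y := Tmap w u with hy
  set v := gradient f y with hv
  have hvgrad : HasGradientAt f v y := (hf y).hasGradientAt
  -- the candidate gradient
  set G : EuclideanSpace ℝ (Fin d ⊕ Fin d × Fin d) :=
    (WithLp.equiv 2 _).symm (Sum.elim (fun i => v i) fun p => v p.1 * u p.2) with hG
  have hLw : L w = y := rfl
  have hfd : HasFDerivAt (fun w' => f (Tmap w' u))
      ((InnerProductSpace.toDual ℝ _ v).comp L) w := by
    have h1 : HasFDerivAt f (InnerProductSpace.toDual ℝ _ v) y := hvgrad.hasFDerivAt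
    exact h1.comp w (L.hasFDerivAt)
  have hGdual : InnerProductSpace.toDual ℝ (EuclideanSpace ℝ (Fin d ⊕ Fin d × Fin d)) G
      = (InnerProductSpace.toDual ℝ _ v).comp L := by
    apply ContinuousLinearMap.ext
    intro z
    simp only [InnerProductSpace.toDual_apply_apply, ContinuousLinearMap.coe_comp', Function.comp_apply]
    have hLz : ∀ i, (L z) i = (∑ j, z (Sum.inr (i, j)) * u j) + z (Sum.inl i) := fun i => rfl
    simp only [PiLp.inner_apply, RCLike.inner_apply', starRingEnd_apply, star_trivial]
    rw [Fintype.sum_sum_type]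
    simp only [hG, WithLp.equiv_symm_apply, PiLp.toLp_apply, Sum.elim_inl, Sum.elim_inr]
    have : ∀ i, v i * (L z) i = v i * z (Sum.inl i) + ∑ j, (v i * u j) * z (Sum.inr (i, j)) := by
      intro i
      rw [hLz i, mul_add, Finset.mul_sum, add_comm]
      congr 1
      exact Finset.sum_congr rfl fun j _ => by ring
    simp only [this]
    rw [Finset.sum_add_distrib, Fintype.sum_prod_type]
  have hGgrad : HasGradientAt (fun w' => f (Tmap w' u)) G w := by
    rw [hasGradientAt_iff_hasFDerivAt, hGdual]
    exact hfd
  rw [hGgrad.gradient]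
  -- now compute norms
  have hnG : ‖G‖ ^ 2 = ∑ i, (v i) ^ 2 + ∑ p : Fin d × Fin d, (v p.1 * u p.2) ^ 2 := by
    rw [← real_inner_self_eq_norm_sq]
    simp only [PiLp.inner_apply, RCLike.inner_apply, starRingEnd_apply, star_trivial]
    rw [Fintype.sum_sum_type]
    simp only [hG, WithLp.equiv_symm_apply, PiLp.toLp_apply, Sum.elim_inl, Sum.elim_inr, sq]
  have hnv : ‖v‖ ^ 2 = ∑ i, (v i) ^ 2 := by
    rw [← real_inner_self_eq_norm_sq]
    simp only [PiLp.inner_apply, RCLike.inner_apply, starRingEnd_apply, star_trivial, sq]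
  have hnu : ‖u‖ ^ 2 = ∑ j, (u j) ^ 2 := by
    rw [← real_inner_self_eq_norm_sq]
    simp only [PiLp.inner_apply, RCLike.inner_apply, starRingEnd_apply, star_trivial, sq]
  rw [hnG, hnv, hnu, Fintype.sum_prod_type]
  have : ∑ i, ∑ j, (v i * u j) ^ 2 = (∑ i, (v i) ^ 2) * (∑ j, (u j) ^ 2) := by
    rw [Finset.sum_mul_sum]
    congr 1; ext i; congr 1; ext j; ring
  rw [this]; ring
end
end

section
/- Let u be a random vector in ℝ^d whose components u₁, …, u_d are i.i.d. with E[u₁] = E[u₁³] = 0, Var[u₁] = 1, and E[u₁⁴] = κ < ∞. Let T_w(u) = Cu + m for m ∈ ℝ^d and C ∈ ℝ^{d×d}. Then for any fixed vector z̄ ∈ ℝ^d, E[‖T_w(u) − z̄‖₂² (1 + ‖u‖₂²)] = (d+1) ‖m − z̄‖₂² + (d+κ) ‖C‖_F², where ‖C‖_F is the Frobenius norm of C. -/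
noncomputable section

open MeasureTheory ProbabilityTheory
open scoped RealInnerProductSpace ENNReal

section Aux

variable {Ω : Type*} [MeasurableSpace Ω] {μ : Measure Ω} [IsProbabilityMeasure μ]

lemma mulL2 {f g : Ω → ℝ} (hf : MemLp f 4 μ) (hg : MemLp g 4 μ) :
    MemLp (fun ω => f ω * g ω) 2 μ := by
  have h2 : (1:ℝ≥0∞)/2 = 1/4 + 1/4 := by
    rw [ENNReal.div_add_div_same, show (1:ℝ≥0∞)+1 = 2 by norm_num,
      ENNReal.div_eq_div_iff (by norm_num) (by norm_num) (by norm_num) (by norm_num)]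
    norm_num
  have : ENNReal.HolderTriple 4 4 2 := ⟨by simpa [one_div] using h2.symm⟩
  have := MemLp.smul (r := 2) hg hf
  exact this

lemma intL2 {f g : Ω → ℝ} (hf : MemLp f 2 μ) (hg : MemLp g 2 μ) :
    Integrable (fun ω => f ω * g ω) μ := by
  have h2 : (1:ℝ≥0∞)/1 = 1/2 + 1/2 := by simp [one_div, ENNReal.inv_two_add_inv_two]
  have := (MemLp.smul (r := 1) hg hf).integrable le_rfl
  exact this

end Aux

/-- if `u` is standardized (i.i.d. components, `E[u₁] = E[u₁³] = 0`,
`Var[u₁] = 1`) with fourth moment `κ = E[u₁⁴] < ∞`, then for `T_w(u) = C u + m` and any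
fixed `z̄`, `E[‖T_w(u) − z̄‖₂² (1 + ‖u‖₂²)] = (d+1)‖m − z̄‖₂² + (d+κ)‖C‖_F²`. -/
theorem stmt_5 {Ω : Type*} [MeasurableSpace Ω] (μ : Measure Ω) [IsProbabilityMeasure μ]
    (d : ℕ) (hd : 0 < d) (u : Ω → EuclideanSpace ℝ (Fin d))
    (hmeas : ∀ i, Measurable fun ω => u ω i)
    (hindep : iIndepFun (fun i ω => u ω i) μ)
    (hident : ∀ i j : Fin d, IdentDistrib (fun ω => u ω i) (fun ω => u ω j) μ μ)
    (hmean : ∀ i, ∫ ω, u ω i ∂μ = 0)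
    (hthird : ∀ i, ∫ ω, u ω i ^ 3 ∂μ = 0)
    (hvar : ∀ i, ∫ ω, u ω i ^ 2 ∂μ = 1)
    (hL4 : ∀ i, MemLp (fun ω => u ω i) 4 μ)
    (κ : ℝ) (hκ : κ = ∫ ω, u ω ⟨0, hd⟩ ^ 4 ∂μ)
    (m zbar : EuclideanSpace ℝ (Fin d)) (C : Matrix (Fin d) (Fin d) ℝ) :
    ∫ ω, ‖Tmap (param m C) (u ω) - zbar‖ ^ 2 * (1 + ‖u ω‖ ^ 2) ∂μ
      = ((d : ℝ) + 1) * ‖m - zbar‖ ^ 2 + ((d : ℝ) + κ) * ∑ i, ∑ j, C i j ^ 2 := by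
  classical
  -- abbreviations
  set K : Ω → ℝ := fun ω => 1 + ∑ k, u ω k ^ 2 with hK
  set a : Fin d → ℝ := fun i => m i - zbar i with ha
  -- basic Memℒp / integrability facts
  have hM2 : ∀ j, MemLp (fun ω => u ω j) 2 μ :=
    fun j => (hL4 j).mono_exponent (by norm_num)
  have hmul2 : ∀ j k, MemLp (fun ω => u ω j * u ω k) 2 μ :=
    fun j k => mulL2 (hL4 j) (hL4 k)
  have intX : ∀ j, Integrable (fun ω => u ω j) μ :=
    fun j => (hM2 j).integrable one_le_two
  have int2 : ∀ j k, Integrable (fun ω => u ω j * u ω k) μ :=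
    fun j k => (hmul2 j k).integrable one_le_two
  have int3 : ∀ j k l, Integrable (fun ω => u ω j * (u ω k * u ω l)) μ :=
    fun j k l => intL2 (hM2 j) (hmul2 k l)
  have int4 : ∀ j k l p, Integrable (fun ω => u ω j * u ω k * (u ω l * u ω p)) μ :=
    fun j k l p => intL2 (hmul2 j k) (hmul2 l p)
  have intsq : ∀ k, Integrable (fun ω => u ω k ^ 2) μ := fun k => by
    simpa [pow_two] using int2 k k
  have intJK : ∀ j k, Integrable (fun ω => u ω j * u ω k ^ 2) μ := fun j k => by
    simpa [pow_two] using int3 j k k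
  have intJJK : ∀ j j' k, Integrable (fun ω => u ω j * u ω j' * u ω k ^ 2) μ := fun j j' k => by
    simpa [pow_two] using int4 j j' k k
  -- moments
  have m4 : ∀ j, ∫ ω, u ω j ^ 4 ∂μ = κ := fun j => by
    rw [hκ]
    exact ((hident j ⟨0, hd⟩).comp (measurable_id.pow_const 4)).integral_eq
  have pm0 : ∀ j k, j ≠ k → ∫ ω, u ω j * u ω k ∂μ = 0 := fun j k h => by
    have h2 : ∫ ω, u ω j * u ω k ∂μ = (∫ ω, u ω j ∂μ) * ∫ ω, u ω k ∂μ :=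
      (hindep.indepFun h).integral_fun_mul_eq_mul_integral (intX j).aestronglyMeasurable (intX k).aestronglyMeasurable
    rw [h2, hmean j, zero_mul]
  have pm2 : ∀ j k, ∫ ω, u ω j * u ω k ∂μ = if j = k then 1 else 0 := fun j k => by
    by_cases h : j = k
    · subst h
      simp only [if_pos rfl, ← pow_two]
      exact hvar j
    · rw [if_neg h]; exact pm0 j k h
  -- E[u_j^3 u_k] = 0 for j ≠ k
  have pm31 : ∀ j k, j ≠ k → ∫ ω, u ω j ^ 3 * u ω k ∂μ = 0 := fun j k h => by
    have hI : IndepFun (fun ω => u ω j ^ 3) (fun ω => u ω k) μ :=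
      (hindep.indepFun h).comp (measurable_id.pow_const 3) measurable_id
    have hint3 : Integrable (fun ω => u ω j ^ 3) μ := by
      have := int3 j j j
      simpa [show ∀ x : ℝ, x * (x * x) = x ^ 3 from fun x => by ring] using this
    have h2 : ∫ ω, u ω j ^ 3 * u ω k ∂μ = (∫ ω, u ω j ^ 3 ∂μ) * ∫ ω, u ω k ∂μ :=
      hI.integral_fun_mul_eq_mul_integral hint3.aestronglyMeasurable (intX k).aestronglyMeasurable
    rw [h2, hthird j, zero_mul]
  -- E[u_j^2 u_k^2] = 1 for j ≠ k
  have pm22 : ∀ j k, j ≠ k → ∫ ω, u ω j ^ 2 * u ω k ^ 2 ∂μ = 1 := fun j k h => by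
    have hI : IndepFun (fun ω => u ω j ^ 2) (fun ω => u ω k ^ 2) μ :=
      (hindep.indepFun h).comp (measurable_id.pow_const 2) (measurable_id.pow_const 2)
    have h2 : ∫ ω, u ω j ^ 2 * u ω k ^ 2 ∂μ = (∫ ω, u ω j ^ 2 ∂μ) * ∫ ω, u ω k ^ 2 ∂μ :=
      hI.integral_fun_mul_eq_mul_integral (intsq j).aestronglyMeasurable (intsq k).aestronglyMeasurable
    rw [h2, hvar j, hvar k, one_mul]
  -- E[(u_j u_j') u_k^2] for j,j' ≠ k
  have pmT : ∀ j j' k, j ≠ k → j' ≠ k →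
      ∫ ω, u ω j * u ω j' * u ω k ^ 2 ∂μ = (∫ ω, u ω j * u ω j' ∂μ) * 1 := fun j j' k hjk hj'k => by
    have hI : IndepFun (fun ω => u ω j * u ω j') (fun ω => u ω k ^ 2) μ := by
      have := hindep.indepFun_prodMk hmeas j j' k hjk hj'k
      exact this.comp (measurable_fst.mul measurable_snd) (measurable_id.pow_const 2)
    have h2 : ∫ ω, u ω j * u ω j' * u ω k ^ 2 ∂μ
        = (∫ ω, u ω j * u ω j' ∂μ) * ∫ ω, u ω k ^ 2 ∂μ :=
      hI.integral_fun_mul_eq_mul_integral (int2 j j').aestronglyMeasurable (intsq k).aestronglyMeasurable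
    rw [h2, hvar k]
  -- E[u_j u_k^2] = 0
  have pmS : ∀ j k, ∫ ω, u ω j * u ω k ^ 2 ∂μ = 0 := fun j k => by
    by_cases h : j = k
    · subst h
      simp only [show ∀ x : ℝ, x * x ^ 2 = x ^ 3 from fun x => by ring]
      exact hthird j
    · have hI : IndepFun (fun ω => u ω j) (fun ω => u ω k ^ 2) μ :=
        (hindep.indepFun h).comp measurable_id (measurable_id.pow_const 2)
      have h2 : ∫ ω, u ω j * u ω k ^ 2 ∂μ = (∫ ω, u ω j ∂μ) * ∫ ω, u ω k ^ 2 ∂μ :=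
        hI.integral_fun_mul_eq_mul_integral (intX j).aestronglyMeasurable (intsq k).aestronglyMeasurable
      rw [h2, hmean j, zero_mul]
  -- E[u_j u_j' u_k^2]
  have pmJJK : ∀ j j' k, ∫ ω, u ω j * u ω j' * u ω k ^ 2 ∂μ
      = if j = j' then (if k = j then κ else 1) else 0 := by
    intro j j' k
    by_cases h : j = j'
    · subst h
      rw [if_pos rfl]
      by_cases hk : k = j
      · subst hk
        rw [if_pos rfl]
        simp only [show ∀ x : ℝ, x * x * x ^ 2 = x ^ 4 from fun x => by ring]
        exact m4 _
      · rw [if_neg hk]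
        have : ∀ ω, u ω j * u ω j * u ω k ^ 2 = u ω j ^ 2 * u ω k ^ 2 := fun ω => by ring
        rw [integral_congr_ae (Filter.Eventually.of_forall this)]
        exact pm22 j k (Ne.symm hk)
    · rw [if_neg h]
      by_cases hk : k = j
      · subst hk
        have : ∀ ω, u ω k * u ω j' * u ω k ^ 2 = u ω k ^ 3 * u ω j' := fun ω => by ring
        rw [integral_congr_ae (Filter.Eventually.of_forall this)]
        exact pm31 k j' h
      · by_cases hk' : k = j'
        · subst hk'
          have : ∀ ω, u ω j * u ω k * u ω k ^ 2 = u ω k ^ 3 * u ω j := fun ω => by ring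
          rw [integral_congr_ae (Filter.Eventually.of_forall this)]
          exact pm31 k j hk
        · rw [pmT j j' k (Ne.symm hk) (Ne.symm hk'), pm0 j j' h, zero_mul]
  -- the three central integrals
  have I0 : ∫ ω, K ω ∂μ = 1 + (d : ℝ) := by
    rw [hK]
    rw [integral_add (integrable_const 1) (integrable_finset_sum _ fun k _ => intsq k),
      integral_const, integral_finset_sum _ fun k _ => intsq k]
    simp [hvar]
  have intK : Integrable K μ := by
    rw [hK]; exact (integrable_const 1).add (integrable_finset_sum _ fun k _ => intsq k)
  have hKexp1 : ∀ j, (fun ω => u ω j * K ω)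
      = fun ω => u ω j + ∑ k, u ω j * u ω k ^ 2 := fun j => funext fun ω => by
    rw [hK]; simp [mul_add, Finset.mul_sum]
  have intH : ∀ j, Integrable (fun ω => u ω j * K ω) μ := fun j => by
    rw [hKexp1 j]
    exact (intX j).add (integrable_finset_sum _ fun k _ => intJK j k)
  have I1 : ∀ j, ∫ ω, u ω j * K ω ∂μ = 0 := fun j => by
    rw [hKexp1 j,
      integral_add (intX j) (integrable_finset_sum _ fun k _ => intJK j k),
      integral_finset_sum _ fun k _ => intJK j k, hmean j]
    simp [pmS]
  have hKexp2 : ∀ j j', (fun ω => u ω j * u ω j' * K ω)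
      = fun ω => u ω j * u ω j' + ∑ k, u ω j * u ω j' * u ω k ^ 2 := fun j j' => funext fun ω => by
    rw [hK]; simp [mul_add, Finset.mul_sum]
  have intG : ∀ j j', Integrable (fun ω => u ω j * u ω j' * K ω) μ := fun j j' => by
    rw [hKexp2 j j']
    exact (int2 j j').add (integrable_finset_sum _ fun k _ => intJJK j j' k)
  have I2 : ∀ j j', ∫ ω, u ω j * u ω j' * K ω ∂μ
      = if j = j' then ((d : ℝ) + κ) else 0 := fun j j' => by
    rw [hKexp2 j j',
      integral_add (int2 j j') (integrable_finset_sum _ fun k _ => intJJK j j' k),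
      integral_finset_sum _ fun k _ => intJJK j j' k]
    simp only [pmJJK, pm2]
    by_cases h : j = j'
    · subst h
      rw [if_pos rfl]
      have : ∑ k : Fin d, (if k = j then κ else (1:ℝ))
          = ∑ k : Fin d, ((if k = j then κ - 1 else 0) + 1) := by
        refine Finset.sum_congr rfl fun k _ => ?_
        split <;> ring
      rw [if_pos rfl] at *
      simp only [this, Finset.sum_add_distrib, Finset.sum_ite_eq' Finset.univ j,
        Finset.mem_univ, if_pos, Finset.sum_const, Finset.card_univ, Fintype.card_fin,
        nsmul_eq_mul, mul_one]
      ring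
    · simp [h]
  -- pointwise expansion of the integrand
  have hnorm : ∀ v : EuclideanSpace ℝ (Fin d), ‖v‖ ^ 2 = ∑ i, v i ^ 2 := fun v => by
    rw [EuclideanSpace.norm_eq, Real.sq_sqrt (by positivity)]
    simp [Real.norm_eq_abs, sq_abs]
  have hcomp : ∀ ω i, (Tmap (param m C) (u ω) - zbar) i
      = (∑ j, C i j * u ω j) + a i := fun ω i => by
    simp [Tmap, param, ha]
    ring
  have expand : ∀ (Kv : ℝ) (x : Fin d → ℝ),
      (∑ i, ((∑ j, C i j * x j) + a i)^2) * Kv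
    = (∑ i, ∑ j, ∑ j', (C i j * C i j') * (x j * x j' * Kv))
      + (∑ i, ∑ j, (2 * a i * C i j) * (x j * Kv))
      + (∑ i, a i ^ 2) * Kv := by
    intro Kv x
    rw [← Finset.sum_add_distrib, Finset.sum_mul, Finset.sum_mul, ← Finset.sum_add_distrib]
    refine Finset.sum_congr rfl fun i _ => ?_
    rw [add_sq, add_mul, add_mul, pow_two, Finset.sum_mul_sum]
    congr 1
    · congr 1
      · rw [Finset.sum_mul]
        refine Finset.sum_congr rfl fun j _ => ?_
        rw [Finset.sum_mul]
        refine Finset.sum_congr rfl fun j' _ => ?_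
        ring
      · rw [Finset.mul_sum, Finset.sum_mul, Finset.sum_mul]
        refine Finset.sum_congr rfl fun j _ => ?_
        ring
  have hpt : ∀ ω, ‖Tmap (param m C) (u ω) - zbar‖ ^ 2 * (1 + ‖u ω‖ ^ 2)
      = (∑ i, ∑ j, ∑ j', (C i j * C i j') * (u ω j * u ω j' * K ω))
        + (∑ i, ∑ j, (2 * a i * C i j) * (u ω j * K ω))
        + (∑ i, a i ^ 2) * K ω := fun ω => by
    rw [hnorm, hnorm]
    have : (1 : ℝ) + ∑ i, (u ω) i ^ 2 = K ω := rfl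
    rw [this]
    have h1 : (∑ i, ((Tmap (param m C) (u ω) - zbar) i) ^ 2)
        = ∑ i, ((∑ j, C i j * u ω j) + a i) ^ 2 :=
      Finset.sum_congr rfl fun i _ => by rw [hcomp ω i]
    rw [h1]
    exact expand (K ω) (fun j => u ω j)
  -- putting it together
  rw [integral_congr_ae (Filter.Eventually.of_forall hpt)]
  have intP1 : Integrable (fun ω => ∑ i, ∑ j, ∑ j',
      (C i j * C i j') * (u ω j * u ω j' * K ω)) μ :=
    integrable_finset_sum _ fun i _ => integrable_finset_sum _ fun j _ =>
      integrable_finset_sum _ fun j' _ => (intG j j').const_mul _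
  have intP2 : Integrable (fun ω => ∑ i, ∑ j, (2 * a i * C i j) * (u ω j * K ω)) μ :=
    integrable_finset_sum _ fun i _ => integrable_finset_sum _ fun j _ => (intH j).const_mul _
  have intP3 : Integrable (fun ω => (∑ i, a i ^ 2) * K ω) μ := intK.const_mul _
  have intP12 : Integrable (fun ω => (∑ i, ∑ j, ∑ j',
      (C i j * C i j') * (u ω j * u ω j' * K ω))
      + ∑ i, ∑ j, (2 * a i * C i j) * (u ω j * K ω)) μ := intP1.add intP2
  rw [integral_add intP12 intP3, integral_add intP1 intP2]
  have IG : ∀ i, ∫ ω, ∑ j, ∑ j', (C i j * C i j') * (u ω j * u ω j' * K ω) ∂μ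
      = ∑ j, ∑ j', (C i j * C i j') * (if j = j' then ((d:ℝ) + κ) else 0) := fun i => by
    rw [integral_finset_sum _ fun j _ =>
      integrable_finset_sum _ fun j' _ => (intG j j').const_mul _]
    refine Finset.sum_congr rfl fun j _ => ?_
    rw [integral_finset_sum _ fun j' _ => (intG j j').const_mul _]
    refine Finset.sum_congr rfl fun j' _ => ?_
    rw [integral_const_mul, I2]
  have IH : ∀ i, ∫ ω, ∑ j, (2 * a i * C i j) * (u ω j * K ω) ∂μ = 0 := fun i => by
    rw [integral_finset_sum _ fun j _ => (intH j).const_mul _]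
    refine Finset.sum_eq_zero fun j _ => ?_
    rw [integral_const_mul, I1, mul_zero]
  rw [integral_finset_sum _ fun i _ => integrable_finset_sum _ fun j _ =>
      integrable_finset_sum _ fun j' _ => (intG j j').const_mul _]
  rw [integral_finset_sum _ fun i _ => integrable_finset_sum _ fun j _ => (intH j).const_mul _]
  simp only [IG, IH, Finset.sum_const_zero, add_zero, integral_const_mul, I0]
  have e1 : ∑ i, ∑ j, ∑ j', (C i j * C i j') * (if j = j' then ((d:ℝ) + κ) else 0)
      = ((d : ℝ) + κ) * ∑ i, ∑ j, C i j ^ 2 := by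
    rw [Finset.mul_sum]
    refine Finset.sum_congr rfl fun i _ => ?_
    rw [Finset.mul_sum]
    refine Finset.sum_congr rfl fun j _ => ?_
    rw [Finset.sum_eq_single j]
    · rw [if_pos rfl]; ring
    · intro j' _ h; rw [if_neg (fun hh => h hh.symm), mul_zero]
    · intro h; exact absurd (Finset.mem_univ j) h
  have e2 : ‖m - zbar‖ ^ 2 = ∑ i, a i ^ 2 := by
    rw [hnorm]
    exact Finset.sum_congr rfl fun i _ => by rw [ha]; simp
  rw [e1, e2]
  ring
end
end

section
/- Let u be a random vector in ℝ^d whose components u₁, …, u_d are i.i.d. with E[u₁] = E[u₁³] = 0 and finite fourth moments. Let T_w(u) = Cu + m for m ∈ ℝ^d and C ∈ ℝ^{d×d}. Then for any fixed vector z̄ ∈ ℝ^d, E[‖T_w(u) − z̄‖₂² (1 + ‖u‖₂²)] = (1 + d·E[u₁²]) ‖m − z̄‖₂² + (E[u₁²] + (d−1)(E[u₁²])² + E[u₁⁴]) ‖C‖_F². -/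
noncomputable section

open MeasureTheory ProbabilityTheory
open scoped RealInnerProductSpace ENNReal

lemma memLp_mul_of_four {Ω : Type*} [MeasurableSpace Ω] {μ : Measure Ω} {f g : Ω → ℝ}
    (hf : MemLp f 4 μ) (hg : MemLp g 4 μ) : MemLp (fun ω => f ω * g ω) 2 μ := by
  have h : (1:ℝ≥0∞)/2 = 1/4 + 1/4 := by
    rw [ENNReal.div_add_div_same, ENNReal.div_eq_div_iff] <;> norm_num
  exact (hg.smul hf (hpqr := ⟨by simpa [one_div] using h.symm⟩) : MemLp (f • g) 2 μ)

lemma integrable_mul_of_two {Ω : Type*} [MeasurableSpace Ω] {μ : Measure Ω} {f g : Ω → ℝ}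
    (hf : MemLp f 2 μ) (hg : MemLp g 2 μ) : Integrable (fun ω => f ω * g ω) μ := by
  have h : (1:ℝ≥0∞)/1 = 1/2 + 1/2 := by
    rw [ENNReal.div_add_div_same, ENNReal.div_eq_div_iff] <;> norm_num
  have := (hg.smul hf (hpqr := ⟨by simpa [one_div] using h.symm⟩) : MemLp (f • g) 1 μ)
  rw [memLp_one_iff_integrable] at this
  exact this

lemma euclid_norm_sq {d : ℕ} (x : EuclideanSpace ℝ (Fin d)) : ‖x‖^2 = ∑ i, x i ^ 2 := by
  rw [EuclideanSpace.norm_eq, Real.sq_sqrt (by positivity)]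
  simp [sq_abs]

lemma indep_integral_mul {Ω : Type*} [MeasurableSpace Ω] {μ : Measure Ω} {f g : Ω → ℝ}
    (h : IndepFun f g μ) (hf : Integrable f μ) (hg : Integrable g μ) :
    ∫ ω, f ω * g ω ∂μ = (∫ ω, f ω ∂μ) * ∫ ω, g ω ∂μ :=
  h.integral_mul_eq_mul_integral hf.aestronglyMeasurable hg.aestronglyMeasurable

/-- if the components of `u` are i.i.d. with zero first and third moments
and finite fourth moments, then for `T_w(u) = C u + m` and any fixed `z̄`,
`E[‖T_w(u) − z̄‖₂² (1 + ‖u‖₂²)]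
  = (1 + d E[u₁²]) ‖m − z̄‖₂² + (E[u₁²] + (d−1)(E[u₁²])² + E[u₁⁴]) ‖C‖_F²`. -/
theorem stmt_6 {Ω : Type*} [MeasurableSpace Ω] (μ : Measure Ω) [IsProbabilityMeasure μ]
    (d : ℕ) (hd : 0 < d) (u : Ω → EuclideanSpace ℝ (Fin d))
    (hmeas : ∀ i, Measurable fun ω => u ω i)
    (hindep : iIndepFun (fun i ω => u ω i) μ)
    (hident : ∀ i j : Fin d, IdentDistrib (fun ω => u ω i) (fun ω => u ω j) μ μ)
    (hmean : ∀ i, ∫ ω, u ω i ∂μ = 0)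
    (hthird : ∀ i, ∫ ω, u ω i ^ 3 ∂μ = 0)
    (hL4 : ∀ i, MemLp (fun ω => u ω i) 4 μ)
    (m zbar : EuclideanSpace ℝ (Fin d)) (C : Matrix (Fin d) (Fin d) ℝ) :
    ∫ ω, ‖Tmap (param m C) (u ω) - zbar‖ ^ 2 * (1 + ‖u ω‖ ^ 2) ∂μ
      = (1 + (d : ℝ) * ∫ ω, u ω ⟨0, hd⟩ ^ 2 ∂μ) * ‖m - zbar‖ ^ 2
        + ((∫ ω, u ω ⟨0, hd⟩ ^ 2 ∂μ) + ((d : ℝ) - 1) * (∫ ω, u ω ⟨0, hd⟩ ^ 2 ∂μ) ^ 2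
            + ∫ ω, u ω ⟨0, hd⟩ ^ 4 ∂μ) * ∑ i, ∑ j, C i j ^ 2 := by
  set s2 : ℝ := ∫ ω, u ω ⟨0, hd⟩ ^ 2 ∂μ with hs2
  set s4 : ℝ := ∫ ω, u ω ⟨0, hd⟩ ^ 4 ∂μ with hs4
  -- ℒp and integrability facts
  have hX2 : ∀ i, MemLp (fun ω => u ω i) 2 μ :=
    fun i => (hL4 i).mono_exponent (by norm_num)
  have hsq2 : ∀ i, MemLp (fun ω => u ω i ^ 2) 2 μ := by
    intro i; simpa [pow_two] using memLp_mul_of_four (hL4 i) (hL4 i)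
  have int1 : ∀ i, Integrable (fun ω => u ω i) μ := fun i => (hX2 i).integrable one_le_two
  have intsq : ∀ i, Integrable (fun ω => u ω i ^ 2) μ := fun i => (hX2 i).integrable_sq
  have int11 : ∀ i j, Integrable (fun ω => u ω i * u ω j) μ :=
    fun i j => integrable_mul_of_two (hX2 i) (hX2 j)
  have int12 : ∀ i j, Integrable (fun ω => u ω i * u ω j ^ 2) μ :=
    fun i j => integrable_mul_of_two (hX2 i) (hsq2 j)
  have int112 : ∀ i j k, Integrable (fun ω => u ω i * u ω j * u ω k ^ 2) μ :=
    fun i j k => integrable_mul_of_two (memLp_mul_of_four (hL4 i) (hL4 j)) (hsq2 k)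
  have int3 : ∀ i, Integrable (fun ω => u ω i ^ 3) μ := by
    intro i
    have h := integrable_mul_of_two (hX2 i) (hsq2 i)
    have e : ∀ x : ℝ, x * x ^ 2 = x ^ 3 := fun x => by ring
    simpa only [e] using h
  -- moments
  have m2 : ∀ i, ∫ ω, u ω i ^ 2 ∂μ = s2 :=
    fun i => ((hident i ⟨0, hd⟩).comp (measurable_id.pow_const 2)).integral_eq
  have m4 : ∀ i, ∫ ω, u ω i ^ 4 ∂μ = s4 :=
    fun i => ((hident i ⟨0, hd⟩).comp (measurable_id.pow_const 4)).integral_eq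
  have p11 : ∀ i j, i ≠ j → ∫ ω, u ω i * u ω j ∂μ = 0 := by
    intro i j hij
    rw [indep_integral_mul (hindep.indepFun hij) (int1 i) (int1 j), hmean i, zero_mul]
  have p12 : ∀ i k, ∫ ω, u ω i * u ω k ^ 2 ∂μ = 0 := by
    intro i k
    by_cases h : i = k
    · subst h
      have e : ∀ x : ℝ, x * x ^ 2 = x ^ 3 := fun x => by ring
      simp_rw [e]; exact hthird i
    · have hI : IndepFun (fun ω => u ω i) (fun ω => u ω k ^ 2) μ :=
        (hindep.indepFun h).comp measurable_id (measurable_id.pow_const 2)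
      rw [indep_integral_mul hI (int1 i) (intsq k), hmean i, zero_mul]
  have q : ∀ j l k, ∫ ω, u ω j * u ω l * u ω k ^ 2 ∂μ
      = if j = l then (if k = j then s4 else s2 ^ 2) else 0 := by
    intro j l k
    by_cases hjl : j = l
    · subst hjl
      rw [if_pos rfl]
      by_cases hkj : k = j
      · subst hkj
        rw [if_pos rfl]
        have e : ∀ x : ℝ, x * x * x ^ 2 = x ^ 4 := fun x => by ring
        simp_rw [e]; exact m4 k
      · rw [if_neg hkj]
        have hI : IndepFun (fun ω => u ω j ^ 2) (fun ω => u ω k ^ 2) μ :=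
          (hindep.indepFun (fun h => hkj h.symm)).comp
            (measurable_id.pow_const 2) (measurable_id.pow_const 2)
        have e : ∀ x : ℝ, x * x = x ^ 2 := fun x => by ring
        simp_rw [e]
        rw [indep_integral_mul hI (intsq j) (intsq k), m2 j, m2 k, ← pow_two]
    · rw [if_neg hjl]
      by_cases hkj : k = j
      · subst hkj
        have e : ∀ x y : ℝ, x * y * x ^ 2 = x ^ 3 * y := fun x y => by ring
        simp_rw [e]
        have hI : IndepFun (fun ω => u ω k ^ 3) (fun ω => u ω l) μ :=
          (hindep.indepFun hjl).comp (measurable_id.pow_const 3) measurable_id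
        rw [indep_integral_mul hI (int3 k) (int1 l), hthird k, zero_mul]
      · by_cases hkl : k = l
        · subst hkl
          have e : ∀ x y : ℝ, x * y * y ^ 2 = y ^ 3 * x := fun x y => by ring
          simp_rw [e]
          have hI : IndepFun (fun ω => u ω k ^ 3) (fun ω => u ω j) μ :=
            (hindep.indepFun (fun h => hjl h.symm)).comp
              (measurable_id.pow_const 3) measurable_id
          rw [indep_integral_mul hI (int3 k) (int1 j), hthird k, zero_mul]
        · have hk : k ∉ ({j, l} : Finset (Fin d)) := by
            simp [hkj, hkl]
          have hprod := hindep.indepFun_finset_prod_of_notMem hmeas hk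
          rw [Finset.prod_pair hjl] at hprod
          have hI : IndepFun (fun ω => u ω j * u ω l) (fun ω => u ω k ^ 2) μ :=
            hprod.comp measurable_id (measurable_id.pow_const 2)
          rw [indep_integral_mul hI (int11 j l) (intsq k), p11 j l hjl, zero_mul]
  -- aggregated integrals
  have intW : Integrable (fun ω => 1 + ∑ k, u ω k ^ 2) μ :=
    (integrable_const 1).add (integrable_finset_sum _ fun k _ => intsq k)
  have iW : ∫ ω, (1 + ∑ k, u ω k ^ 2) ∂μ = 1 + (d : ℝ) * s2 := by
    rw [integral_add (integrable_const 1) (integrable_finset_sum _ fun k _ => intsq k),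
      integral_const, integral_finset_sum _ fun k _ => intsq k]
    simp [m2, Finset.sum_const, Finset.card_univ, nsmul_eq_mul]
  have intZ : ∀ j, Integrable (fun ω => u ω j * (1 + ∑ k, u ω k ^ 2)) μ := by
    intro j
    have e : (fun ω => u ω j * (1 + ∑ k, u ω k ^ 2))
        = fun ω => u ω j + ∑ k, u ω j * u ω k ^ 2 := by
      funext ω; rw [mul_add, mul_one, Finset.mul_sum]
    rw [e]
    exact (int1 j).add (integrable_finset_sum _ fun k _ => int12 j k)
  have iZ : ∀ j, ∫ ω, u ω j * (1 + ∑ k, u ω k ^ 2) ∂μ = 0 := by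
    intro j
    simp_rw [mul_add, mul_one, Finset.mul_sum]
    rw [integral_add (int1 j) (integrable_finset_sum _ fun k _ => int12 j k), hmean j,
      integral_finset_sum _ fun k _ => int12 j k]
    simp [p12]
  have intY : ∀ j l, Integrable (fun ω => u ω j * u ω l * (1 + ∑ k, u ω k ^ 2)) μ := by
    intro j l
    have e : (fun ω => u ω j * u ω l * (1 + ∑ k, u ω k ^ 2))
        = fun ω => u ω j * u ω l + ∑ k, u ω j * u ω l * u ω k ^ 2 := by
      funext ω; rw [mul_add, mul_one, Finset.mul_sum]
    rw [e]
    exact (int11 j l).add (integrable_finset_sum _ fun k _ => int112 j l k)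
  have iY : ∀ j l, ∫ ω, u ω j * u ω l * (1 + ∑ k, u ω k ^ 2) ∂μ
      = if j = l then s2 + (s4 + ((d : ℝ) - 1) * s2 ^ 2) else 0 := by
    intro j l
    simp_rw [mul_add, mul_one, Finset.mul_sum]
    rw [integral_add (int11 j l) (integrable_finset_sum _ fun k _ => int112 j l k),
      integral_finset_sum _ fun k _ => int112 j l k]
    simp only [q]
    by_cases hjl : j = l
    · subst hjl
      simp only [if_pos rfl]
      have e1 : ∫ ω, u ω j * u ω j ∂μ = s2 := by
        have e : ∀ x : ℝ, x * x = x ^ 2 := fun x => by ring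
        simp_rw [e]; exact m2 j
      rw [e1]
      congr 1
      rw [← Finset.add_sum_erase _ _ (Finset.mem_univ j)]
      rw [if_pos rfl]
      congr 1
      calc ∑ k ∈ Finset.univ.erase j, (if k = j then s4 else s2 ^ 2)
          = ∑ k ∈ Finset.univ.erase j, s2 ^ 2 :=
            Finset.sum_congr rfl fun k hk => if_neg (Finset.ne_of_mem_erase hk)
        _ = ((d : ℝ) - 1) * s2 ^ 2 := by
            rw [Finset.sum_const, Finset.card_erase_of_mem (Finset.mem_univ j),
              Finset.card_univ, Fintype.card_fin, nsmul_eq_mul,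
              Nat.cast_sub (by omega : 1 ≤ d), Nat.cast_one]
    · simp only [if_neg hjl]
      rw [p11 j l hjl]
      simp
  -- pointwise expansion
  have hpt : ∀ ω, ‖Tmap (param m C) (u ω) - zbar‖ ^ 2 * (1 + ‖u ω‖ ^ 2)
      = (∑ i, ∑ j, ∑ l, (C i j * C i l) * (u ω j * u ω l * (1 + ∑ k, u ω k ^ 2)))
        + ((∑ i, ∑ j, (2 * (m i - zbar i) * C i j) * (u ω j * (1 + ∑ k, u ω k ^ 2)))
          + (∑ i, (m i - zbar i) ^ 2) * (1 + ∑ k, u ω k ^ 2)) := by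
    intro ω
    rw [euclid_norm_sq, euclid_norm_sq]
    have hcoord : ∀ i, (Tmap (param m C) (u ω) - zbar) i
        = (∑ j, C i j * u ω j) + m i - zbar i := by
      intro i; simp [Tmap, param]
    simp_rw [hcoord]
    rw [Finset.sum_mul]
    have per : ∀ i, ((∑ j, C i j * u ω j) + m i - zbar i) ^ 2 * (1 + ∑ k, u ω k ^ 2)
        = (∑ j, ∑ l, (C i j * C i l) * (u ω j * u ω l * (1 + ∑ k, u ω k ^ 2)))
          + ((∑ j, (2 * (m i - zbar i) * C i j) * (u ω j * (1 + ∑ k, u ω k ^ 2)))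
            + (m i - zbar i) ^ 2 * (1 + ∑ k, u ω k ^ 2)) := by
      intro i
      have e1 : (∑ j, C i j * u ω j) * (∑ l, C i l * u ω l) * (1 + ∑ k, u ω k ^ 2)
          = ∑ j, ∑ l, (C i j * C i l) * (u ω j * u ω l * (1 + ∑ k, u ω k ^ 2)) := by
        rw [Finset.sum_mul_sum, Finset.sum_mul]
        refine Finset.sum_congr rfl fun j _ => ?_
        rw [Finset.sum_mul]
        exact Finset.sum_congr rfl fun l _ => by ring
      have e2 : (∑ j, (2 * (m i - zbar i) * C i j) * (u ω j * (1 + ∑ k, u ω k ^ 2)))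
          = 2 * (m i - zbar i) * ((∑ j, C i j * u ω j) * (1 + ∑ k, u ω k ^ 2)) := by
        rw [Finset.sum_mul, Finset.mul_sum]
        exact Finset.sum_congr rfl fun j _ => by ring
      rw [← e1, e2]
      ring
    refine (Finset.sum_congr rfl fun i _ => per i).trans ?_
    rw [Finset.sum_add_distrib, Finset.sum_add_distrib, ← Finset.sum_mul]
  -- the three aggregated integrals
  set K : ℝ := s2 + (s4 + ((d : ℝ) - 1) * s2 ^ 2) with hK
  have IA : ∫ ω, (∑ i, ∑ j, ∑ l, (C i j * C i l) * (u ω j * u ω l * (1 + ∑ k, u ω k ^ 2))) ∂μ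
      = ∑ i : Fin d, ∑ j, C i j ^ 2 * K := by
    rw [integral_finset_sum _ fun i _ => integrable_finset_sum _ fun j _ =>
      integrable_finset_sum _ fun l _ => (intY j l).const_mul _]
    refine Finset.sum_congr rfl fun i _ => ?_
    rw [integral_finset_sum _ fun j _ =>
      integrable_finset_sum _ fun l _ => (intY j l).const_mul _]
    refine Finset.sum_congr rfl fun j _ => ?_
    rw [integral_finset_sum _ fun l _ => (intY j l).const_mul _]
    have : ∀ l, ∫ ω, (C i j * C i l) * (u ω j * u ω l * (1 + ∑ k, u ω k ^ 2)) ∂μ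
        = (C i j * C i l) * (if j = l then K else 0) := by
      intro l; rw [integral_const_mul, iY j l]
    simp_rw [this, mul_ite, mul_zero]
    rw [Finset.sum_ite_eq, if_pos (Finset.mem_univ j), ← pow_two]
  have IB : ∫ ω, (∑ i, ∑ j, (2 * (m i - zbar i) * C i j) * (u ω j * (1 + ∑ k, u ω k ^ 2))) ∂μ
      = 0 := by
    rw [integral_finset_sum _ fun i _ => integrable_finset_sum _ fun j _ => (intZ j).const_mul _]
    refine Finset.sum_eq_zero fun i _ => ?_
    rw [integral_finset_sum _ fun j _ => (intZ j).const_mul _]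
    refine Finset.sum_eq_zero fun j _ => ?_
    rw [integral_const_mul, iZ j, mul_zero]
  have IC : ∫ ω, (∑ i, (m i - zbar i) ^ 2) * (1 + ∑ k, u ω k ^ 2) ∂μ
      = (∑ i, (m i - zbar i) ^ 2) * (1 + (d : ℝ) * s2) := by
    rw [integral_const_mul, iW]
  -- assembly
  have intA : Integrable
      (fun ω => ∑ i, ∑ j, ∑ l, (C i j * C i l) * (u ω j * u ω l * (1 + ∑ k, u ω k ^ 2))) μ :=
    integrable_finset_sum _ fun i _ => integrable_finset_sum _ fun j _ =>
      integrable_finset_sum _ fun l _ => (intY j l).const_mul _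
  have intB : Integrable
      (fun ω => ∑ i, ∑ j, (2 * (m i - zbar i) * C i j) * (u ω j * (1 + ∑ k, u ω k ^ 2))) μ :=
    integrable_finset_sum _ fun i _ => integrable_finset_sum _ fun j _ => (intZ j).const_mul _
  have intC : Integrable (fun ω => (∑ i, (m i - zbar i) ^ 2) * (1 + ∑ k, u ω k ^ 2)) μ :=
    intW.const_mul _
  have hnorm : ‖m - zbar‖ ^ 2 = ∑ i, (m i - zbar i) ^ 2 := by
    rw [euclid_norm_sq]
    refine Finset.sum_congr rfl fun i _ => ?_
    simp
  have intBC : Integrable (fun ω =>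
      (∑ i, ∑ j, (2 * (m i - zbar i) * C i j) * (u ω j * (1 + ∑ k, u ω k ^ 2)))
        + (∑ i, (m i - zbar i) ^ 2) * (1 + ∑ k, u ω k ^ 2)) μ := intB.add intC
  rw [integral_congr_ae (Filter.Eventually.of_forall hpt),
    integral_add intA intBC, integral_add intB intC, IA, IB, IC, hnorm]
  simp only [← Finset.sum_mul]
  ring
end
end

section
/- Let f : ℝ^d → ℝ be differentiable and M-smooth, i.e. ‖∇f(y) − ∇f(z)‖₂ ≤ M ‖y − z‖₂ for all y, z ∈ ℝ^d, and let z̄ ∈ ℝ^d be a stationary point of f (∇f(z̄) = 0). Let u ∼ s where s is standardized with fourth moment κ = E[u₁⁴] < ∞, let T_w(u) = Cu + m for w = (m, C), and let g = ∇_w f(T_w(u)) be the gradient of w ↦ f(T_w(u)) with respect to all d + d² parameters. Then E‖g‖₂² ≤ M² ((d+1) ‖m − z̄‖₂² + (d+κ) ‖C‖_F²). -/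
noncomputable section

open MeasureTheory ProbabilityTheory
open scoped RealInnerProductSpace

noncomputable section AuxStmt7

set_option linter.unusedSectionVars false

noncomputable def Lmap {d : ℕ} (uu : EuclideanSpace ℝ (Fin d)) :
    EuclideanSpace ℝ (Fin d ⊕ Fin d × Fin d) →L[ℝ] EuclideanSpace ℝ (Fin d) :=
  LinearMap.toContinuousLinearMap
  { toFun := fun w => Tmap w uu
    map_add' := by
      intro w w'
      apply PiLp.ext
      intro i
      simp [Tmap, add_mul, Finset.sum_add_distrib]
      ring
    map_smul' := by
      intro c w
      apply PiLp.ext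
      intro i
      simp [Tmap, Finset.mul_sum, mul_add, mul_assoc] }

lemma Lmap_apply {d : ℕ} (uu w : _) (i : Fin d) :
    Lmap uu w i = (∑ j, w (Sum.inr (i, j)) * uu j) + w (Sum.inl i) := rfl

lemma Lmap_single_inl {d : ℕ} (uu : EuclideanSpace ℝ (Fin d)) (i : Fin d) :
    Lmap uu (EuclideanSpace.single (Sum.inl i) (1:ℝ)) = EuclideanSpace.single i 1 := by
  apply PiLp.ext
  intro i'
  simp [Lmap_apply, EuclideanSpace.single_apply]

lemma Lmap_single_inr {d : ℕ} (uu : EuclideanSpace ℝ (Fin d)) (i j : Fin d) :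
    Lmap uu (EuclideanSpace.single (Sum.inr (i, j)) (1:ℝ)) = uu j • EuclideanSpace.single i 1 := by
  apply PiLp.ext
  intro i'
  simp [Lmap_apply, EuclideanSpace.single_apply, Finset.sum_ite_eq, Prod.ext_iff]
  rcases eq_or_ne i' i with rfl | h
  · simp
  · simp [h]

lemma norm_sq_eucl {ι : Type*} [Fintype ι] (x : EuclideanSpace ℝ ι) : ‖x‖^2 = ∑ i, x i ^2 := by
  rw [← real_inner_self_eq_norm_sq]
  simp only [PiLp.inner_apply, RCLike.inner_apply, conj_trivial, sq]

lemma grad_comp {d : ℕ} (f : EuclideanSpace ℝ (Fin d) → ℝ) (hf : Differentiable ℝ f)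
    (uu : EuclideanSpace ℝ (Fin d)) (w : EuclideanSpace ℝ (Fin d ⊕ Fin d × Fin d)) :
    ‖gradient (fun w' => f (Tmap w' uu)) w‖^2
      = ‖gradient f (Tmap w uu)‖^2 * (1 + ‖uu‖^2) := by
  have hfd : fderiv ℝ (fun w' => f (Tmap w' uu)) w
      = (fderiv ℝ f (Tmap w uu)).comp (Lmap uu : _ →L[ℝ] _) := by
    have : (fun w' => f (Tmap w' uu)) = f ∘ (Lmap uu) := rfl
    rw [this, fderiv_comp w (hf.differentiableAt) ((Lmap uu).differentiable.differentiableAt),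
      (Lmap uu).fderiv]
    rfl
  set y := Tmap w uu with hy
  set G := gradient (fun w' => f (Tmap w' uu)) w with hG
  have hGv : ∀ v, ⟪G, v⟫ = fderiv ℝ f y ((Lmap uu) v) := by
    intro v
    simp only [hG, gradient]
    rw [InnerProductSpace.toDual_symm_apply, hfd]
    rfl
  have hGfv : ∀ i, gradient f y i = fderiv ℝ f y (EuclideanSpace.single i 1) := by
    intro i
    have : ⟪gradient f y, EuclideanSpace.single i 1⟫ = fderiv ℝ f y (EuclideanSpace.single i 1) := by
      simp [gradient]
    rw [← this]
    rw [EuclideanSpace.inner_single_right]; simp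
  have hGk : ∀ k, G k = fderiv ℝ f y ((Lmap uu) (EuclideanSpace.single k 1)) := by
    intro k
    rw [← hGv (EuclideanSpace.single k 1)]
    rw [EuclideanSpace.inner_single_right]; simp
  rw [norm_sq_eucl G, norm_sq_eucl (gradient f y), norm_sq_eucl uu]
  rw [Fintype.sum_sum_type]
  have h1 : ∀ i : Fin d, G (Sum.inl i) = gradient f y i := by
    intro i
    rw [hGk, Lmap_single_inl, hGfv]
  have h2 : ∀ p : Fin d × Fin d, G (Sum.inr p) = uu p.2 * gradient f y p.1 := by
    intro p
    rw [hGk, Lmap_single_inr, ContinuousLinearMap.map_smul, ← hGfv, smul_eq_mul]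
  simp only [h1, h2]
  rw [Fintype.sum_prod_type]
  have hrow : ∀ a : Fin d, ∑ b, (uu b * gradient f y a)^2 = gradient f y a ^2 * ∑ b, uu b ^2 := by
    intro a; rw [Finset.mul_sum]; congr 1; ext b; ring
  simp only [hrow]
  rw [← Finset.sum_mul, mul_add, mul_one]


variable {Ω : Type*} [MeasurableSpace Ω] {μ : Measure Ω} [IsProbabilityMeasure μ]
  {d : ℕ} {u : Ω → EuclideanSpace ℝ (Fin d)}

set_option linter.unusedSectionVars false

section moments

set_option linter.unusedSectionVars false

lemma E11 (hmeas : ∀ i, Measurable fun ω => u ω i)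
    (hindep : iIndepFun (fun i ω => u ω i) μ)
    (hmean : ∀ i, ∫ ω, u ω i ∂μ = 0)
    (hvar : ∀ i, ∫ ω, u ω i ^ 2 ∂μ = 1) (j k : Fin d) : ∫ ω, u ω j * u ω k ∂μ = if j = k then 1 else 0 := by
  rcases eq_or_ne j k with rfl | h
  · simp only [if_pos rfl, ← sq]; exact hvar j
  · rw [if_neg h]
    have hi := (hindep.indepFun h).integral_fun_mul_eq_mul_integral
      (hmeas j).aestronglyMeasurable (hmeas k).aestronglyMeasurable
    rw [hi, hmean j, zero_mul]

lemma E12 (hmeas : ∀ i, Measurable fun ω => u ω i)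
    (hindep : iIndepFun (fun i ω => u ω i) μ)
    (hmean : ∀ i, ∫ ω, u ω i ∂μ = 0)
    (hthird : ∀ i, ∫ ω, u ω i ^ 3 ∂μ = 0) (j k : Fin d) : ∫ ω, u ω j * u ω k ^ 2 ∂μ = 0 := by
  rcases eq_or_ne j k with rfl | h
  · have : ∀ ω, u ω j * u ω j ^ 2 = u ω j ^ 3 := fun ω => by ring
    simp only [this]; exact hthird j
  · have hind : IndepFun (fun ω => u ω j) (fun ω => u ω k ^ 2) μ :=
      (hindep.indepFun h).comp measurable_id (measurable_id.pow_const 2)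
    rw [hind.integral_fun_mul_eq_mul_integral (hmeas j).aestronglyMeasurable
      ((hmeas k).pow_const 2).aestronglyMeasurable, hmean j, zero_mul]

lemma E22 (hmeas : ∀ i, Measurable fun ω => u ω i)
    (hindep : iIndepFun (fun i ω => u ω i) μ)
    (hvar : ∀ i, ∫ ω, u ω i ^ 2 ∂μ = 1)
    (hident : ∀ i j : Fin d, IdentDistrib (fun ω => u ω i) (fun ω => u ω j) μ μ)
    (hd : 0 < d) (κ : ℝ) (hκ : κ = ∫ ω, u ω ⟨0, hd⟩ ^ 4 ∂μ) (j k : Fin d) :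
    ∫ ω, u ω j ^ 2 * u ω k ^ 2 ∂μ = if j = k then κ else 1 := by
  rcases eq_or_ne j k with rfl | h
  · have h4 : ∀ ω, u ω j ^ 2 * u ω j ^ 2 = u ω j ^ 4 := fun ω => by ring
    simp only [h4, if_pos rfl, hκ]
    exact ((hident j ⟨0, hd⟩).comp (measurable_id.pow_const 4)).integral_eq
  · have hind : IndepFun (fun ω => u ω j ^ 2) (fun ω => u ω k ^ 2) μ :=
      (hindep.indepFun h).comp (measurable_id.pow_const 2) (measurable_id.pow_const 2)
    rw [if_neg h, hind.integral_fun_mul_eq_mul_integral ((hmeas j).pow_const 2).aestronglyMeasurable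
      ((hmeas k).pow_const 2).aestronglyMeasurable, hvar j, hvar k, one_mul]

lemma E112 (hmeas : ∀ i, Measurable fun ω => u ω i)
    (hindep : iIndepFun (fun i ω => u ω i) μ)
    (hmean : ∀ i, ∫ ω, u ω i ∂μ = 0) (j j' k : Fin d) (h : j ≠ j') : ∫ ω, u ω j * u ω j' * u ω k ^ 2 ∂μ = 0 := by
  rcases eq_or_ne k j with rfl | hkj
  · have he : ∀ ω, u ω k * u ω j' * u ω k ^ 2 = u ω k ^ 3 * u ω j' := fun ω => by ring
    simp only [he]
    have hind : IndepFun (fun ω => u ω k ^ 3) (fun ω => u ω j') μ :=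
      (hindep.indepFun h).comp (measurable_id.pow_const 3) measurable_id
    rw [hind.integral_fun_mul_eq_mul_integral ((hmeas k).pow_const 3).aestronglyMeasurable
      (hmeas j').aestronglyMeasurable, hmean j', mul_zero]
  rcases eq_or_ne k j' with rfl | hkj'
  · have he : ∀ ω, u ω j * u ω k * u ω k ^ 2 = u ω j * u ω k ^ 3 := fun ω => by ring
    simp only [he]
    have hind : IndepFun (fun ω => u ω j) (fun ω => u ω k ^ 3) μ :=
      (hindep.indepFun h).comp measurable_id (measurable_id.pow_const 3)
    rw [hind.integral_fun_mul_eq_mul_integral (hmeas j).aestronglyMeasurable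
      ((hmeas k).pow_const 3).aestronglyMeasurable, hmean j, zero_mul]
  · have hpair : IndepFun (fun ω => (u ω j', u ω k)) (fun ω => u ω j) μ :=
      hindep.indepFun_prodMk hmeas j' k j (Ne.symm h) hkj
    have hind : IndepFun (fun ω => u ω j) (fun ω => u ω j' * u ω k ^ 2) μ :=
      (hpair.comp (measurable_fst.mul (measurable_snd.pow_const 2)) measurable_id).symm
    have he : ∀ ω, u ω j * u ω j' * u ω k ^ 2 = u ω j * (u ω j' * u ω k ^ 2) :=
      fun ω => by ring
    simp only [he]
    rw [hind.integral_fun_mul_eq_mul_integral (hmeas j).aestronglyMeasurable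
      ((hmeas j').mul ((hmeas k).pow_const 2)).aestronglyMeasurable, hmean j, zero_mul]
end moments

set_option linter.unusedSectionVars false

lemma memL2_mul {φ ψ : Ω → ℝ} (hφ : MemLp φ 4 μ) (hψ : MemLp ψ 4 μ) :
    MemLp (fun ω => φ ω * ψ ω) 2 μ := by
  haveI : ENNReal.HolderTriple 4 4 2 := ⟨by
    rw [← ENNReal.add_halves 2⁻¹]
    norm_num [ENNReal.div_eq_inv_mul, ← ENNReal.mul_inv]⟩
  have h := hψ.smul hφ (p := 4) (q := 4) (r := 2)
  exact h

lemma integrable_mul2 {φ ψ : Ω → ℝ} (hφ : MemLp φ 2 μ) (hψ : MemLp ψ 2 μ) :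
    Integrable (fun ω => φ ω * ψ ω) μ := by
  have h := hψ.smul hφ (p := 2) (q := 2) (r := 1)
  exact (h : MemLp (fun ω => φ ω * ψ ω) 1 μ).integrable le_rfl

lemma per_row
    (hmeas : ∀ i, Measurable fun ω => u ω i)
    (hindep : iIndepFun (fun i ω => u ω i) μ)
    (hident : ∀ i j : Fin d, IdentDistrib (fun ω => u ω i) (fun ω => u ω j) μ μ)
    (hmean : ∀ i, ∫ ω, u ω i ∂μ = 0)
    (hthird : ∀ i, ∫ ω, u ω i ^ 3 ∂μ = 0)
    (hvar : ∀ i, ∫ ω, u ω i ^ 2 ∂μ = 1)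
    (hL4 : ∀ i, MemLp (fun ω => u ω i) 4 μ)
    (hd : 0 < d) (κ : ℝ) (hκ : κ = ∫ ω, u ω ⟨0, hd⟩ ^ 4 ∂μ)
    (c : Fin d → ℝ) (a : ℝ) :
    Integrable (fun ω => ((∑ j, c j * u ω j) + a)^2 * (1 + ∑ k, u ω k ^2)) μ ∧
    ∫ ω, ((∑ j, c j * u ω j) + a)^2 * (1 + ∑ k, u ω k ^2) ∂μ
      = ((d:ℝ)+1) * a^2 + ((d:ℝ)+κ) * ∑ j, c j^2 := by
  have hm2 : ∀ i, MemLp (fun ω => u ω i) 2 μ :=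
    fun i => (hL4 i).mono_exponent (by norm_num)
  have hu2mem : ∀ k, MemLp (fun ω => u ω k ^ 2) 2 μ := fun k => by
    simpa [sq] using memL2_mul (hL4 k) (hL4 k)
  have hintu2 : ∀ k, Integrable (fun ω => u ω k ^ 2) μ := fun k => by
    simpa [sq] using integrable_mul2 (hm2 k) (hm2 k)
  set S : Ω → ℝ := fun ω => ∑ j, c j * u ω j with hSdef
  have hS4 : MemLp S 4 μ := by
    have h := memLp_finset_sum' (μ := μ) (p := 4) Finset.univ
      (fun j (_ : j ∈ Finset.univ) => (hL4 j).const_mul (c j))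
    have hfun : (∑ i : Fin d, fun x => c i * u x i) = S := by
      funext ω; simp [hSdef]
    rwa [hfun] at h
  set A : Ω → ℝ := fun ω => S ω + a with hAdef
  have hA4 : MemLp A 4 μ := hS4.add (memLp_const a)
  have hA2 : MemLp A 2 μ := hA4.mono_exponent (by norm_num)
  have hS2 : MemLp S 2 μ := hS4.mono_exponent (by norm_num)
  have hAsq2 : MemLp (fun ω => A ω ^ 2) 2 μ := by simpa [sq] using memL2_mul hA4 hA4
  have hSsq2 : MemLp (fun ω => S ω ^ 2) 2 μ := by simpa [sq] using memL2_mul hS4 hS4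
  have hintA2 : Integrable (fun ω => A ω ^ 2) μ := by
    simpa [sq] using integrable_mul2 hA2 hA2
  have hintA2u : ∀ k, Integrable (fun ω => A ω ^ 2 * u ω k ^ 2) μ :=
    fun k => integrable_mul2 hAsq2 (hu2mem k)
  have hintS : Integrable S μ := by
    apply integrable_finset_sum
    exact fun j _ => ((hL4 j).integrable (by norm_num)).const_mul (c j)
  have hintS2 : Integrable (fun ω => S ω ^ 2) μ := by
    simpa [sq] using integrable_mul2 hS2 hS2
  have hintSu : ∀ k, Integrable (fun ω => S ω * u ω k ^ 2) μ :=
    fun k => integrable_mul2 hS2 (hu2mem k)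
  have hintS2u : ∀ k, Integrable (fun ω => S ω ^ 2 * u ω k ^ 2) μ :=
    fun k => integrable_mul2 hSsq2 (hu2mem k)
  have hexpand : ∀ ω, A ω ^ 2 * (1 + ∑ k, u ω k ^ 2)
      = A ω ^ 2 + ∑ k, A ω ^ 2 * u ω k ^ 2 := fun ω => by
    rw [mul_add, mul_one, Finset.mul_sum]
  have hintmain : Integrable (fun ω => A ω ^ 2 * (1 + ∑ k, u ω k ^ 2)) μ := by
    have := hintA2.add (integrable_finset_sum Finset.univ fun k _ => hintA2u k)
    apply this.congr
    filter_upwards with ω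
    simp only [Pi.add_apply]
    rw [hexpand ω]
  refine ⟨hintmain, ?_⟩
  -- E[S] = 0
  have hES : ∫ ω, S ω ∂μ = 0 := by
    rw [hSdef, integral_finset_sum _ fun j _ =>
      ((hL4 j).integrable (by norm_num)).const_mul (c j)]
    simp [integral_const_mul, hmean]
  -- E[S^2] = ∑ c^2
  have hES2 : ∫ ω, S ω ^ 2 ∂μ = ∑ j, c j ^ 2 := by
    have hsq : ∀ ω, S ω ^ 2 = ∑ j, ∑ j', c j * c j' * (u ω j * u ω j') := by
      intro ω
      rw [sq, hSdef, Finset.sum_mul_sum]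
      exact Finset.sum_congr rfl fun j _ => Finset.sum_congr rfl fun j' _ => by ring
    simp only [hsq]
    rw [integral_finset_sum _ fun j _ => integrable_finset_sum _ fun j' _ =>
      (integrable_mul2 (hm2 j) (hm2 j')).const_mul _]
    have h2 : ∀ j : Fin d, ∫ ω, ∑ j', c j * c j' * (u ω j * u ω j') ∂μ = c j ^ 2 := by
      intro j
      rw [integral_finset_sum _ fun j' _ => (integrable_mul2 (hm2 j) (hm2 j')).const_mul _]
      have h1 : ∀ j' : Fin d, ∫ ω, c j * c j' * (u ω j * u ω j') ∂μ
          = if j = j' then c j * c j' else 0 := by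
        intro j'
        rw [integral_const_mul, E11 hmeas hindep hmean hvar j j']
        split <;> simp
      simp only [h1]
      rw [Finset.sum_ite_eq]
      simp [sq]
    exact Finset.sum_congr rfl fun j _ => h2 j
  -- E[A^2] = ∑ c^2 + a^2
  have hEA2 : ∫ ω, A ω ^ 2 ∂μ = (∑ j, c j ^ 2) + a ^ 2 := by
    have hexp : ∀ ω, A ω ^ 2 = S ω ^ 2 + ((2 * a) * S ω + a ^ 2) := fun ω => by
      simp only [hAdef]; ring
    simp only [hexp]
    have hg1 : Integrable (fun ω => (2 * a) * S ω + a ^ 2) μ :=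
      (hintS.const_mul _).add (integrable_const _)
    have hg2 : Integrable (fun ω => (2 * a) * S ω) μ := hintS.const_mul _
    rw [integral_add hintS2 hg1, integral_add hg2 (integrable_const _),
      integral_const_mul, hES, hES2, integral_const]
    simp
  -- E[S * u_k^2] = 0
  have hESu : ∀ k, ∫ ω, S ω * u ω k ^ 2 ∂μ = 0 := by
    intro k
    have hexp : ∀ ω, S ω * u ω k ^ 2 = ∑ j, c j * (u ω j * u ω k ^ 2) := fun ω => by
      rw [hSdef]; rw [Finset.sum_mul]
      exact Finset.sum_congr rfl fun j _ => by ring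
    simp only [hexp]
    rw [integral_finset_sum _ fun j _ => (integrable_mul2 (hm2 j) (hu2mem k)).const_mul _]
    have : ∀ j : Fin d, ∫ ω, c j * (u ω j * u ω k ^ 2) ∂μ = 0 := by
      intro j
      rw [integral_const_mul, E12 hmeas hindep hmean hthird j k, mul_zero]
    simp [this]
  -- E[S^2 * u_k^2] = ∑_j c_j^2 * (if j = k then κ else 1)
  have hES2u : ∀ k, ∫ ω, S ω ^ 2 * u ω k ^ 2 ∂μ
      = ∑ j, c j ^ 2 * (if j = k then κ else 1) := by
    intro k
    have hexp : ∀ ω, S ω ^ 2 * u ω k ^ 2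
        = ∑ j, ∑ j', c j * c j' * (u ω j * u ω j' * u ω k ^ 2) := by
      intro ω
      rw [sq, hSdef, Finset.sum_mul_sum, Finset.sum_mul]
      refine Finset.sum_congr rfl fun j _ => ?_
      rw [Finset.sum_mul]
      exact Finset.sum_congr rfl fun j' _ => by ring
    simp only [hexp]
    have hint3 : ∀ j j' : Fin d,
        Integrable (fun ω => c j * c j' * (u ω j * u ω j' * u ω k ^ 2)) μ := by
      intro j j'
      have : Integrable (fun ω => (u ω j * u ω j') * u ω k ^ 2) μ :=
        integrable_mul2 (memL2_mul (hL4 j) (hL4 j')) (hu2mem k)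
      have h2 : Integrable (fun ω => u ω j * u ω j' * u ω k ^ 2) μ := this
      exact h2.const_mul _
    rw [integral_finset_sum _ fun j _ => integrable_finset_sum _ fun j' _ => hint3 j j']
    have h2 : ∀ j : Fin d, ∫ ω, ∑ j', c j * c j' * (u ω j * u ω j' * u ω k ^ 2) ∂μ
        = c j ^ 2 * (if j = k then κ else 1) := by
      intro j
      rw [integral_finset_sum _ fun j' _ => hint3 j j']
      have h1 : ∀ j' : Fin d, ∫ ω, c j * c j' * (u ω j * u ω j' * u ω k ^ 2) ∂μ
          = if j = j' then c j * c j' * (if j = k then κ else 1) else 0 := by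
        intro j'
        rw [integral_const_mul]
        rcases eq_or_ne j j' with rfl | h
        · have : ∀ ω, u ω j * u ω j * u ω k ^ 2 = u ω j ^ 2 * u ω k ^ 2 := fun ω => by ring
          simp only [this]
          rw [E22 hmeas hindep hvar hident hd κ hκ j k]
          simp
        · rw [E112 hmeas hindep hmean j j' k h, if_neg h, mul_zero]
      simp only [h1]
      rw [Finset.sum_ite_eq]
      simp [sq]
    exact Finset.sum_congr rfl fun j _ => h2 j
  -- E[A^2 * u_k^2]
  have hEA2u : ∀ k, ∫ ω, A ω ^ 2 * u ω k ^ 2 ∂μ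
      = (∑ j, c j ^ 2 * (if j = k then κ else 1)) + a ^ 2 := by
    intro k
    have hexp : ∀ ω, A ω ^ 2 * u ω k ^ 2
        = S ω ^ 2 * u ω k ^ 2 + ((2 * a) * (S ω * u ω k ^ 2) + a ^ 2 * u ω k ^ 2) := by
      intro ω; simp only [hAdef]; ring
    simp only [hexp]
    have hg1 : Integrable (fun ω => (2 * a) * (S ω * u ω k ^ 2) + a ^ 2 * u ω k ^ 2) μ :=
      ((hintSu k).const_mul _).add ((hintu2 k).const_mul _)
    have hg2 : Integrable (fun ω => (2 * a) * (S ω * u ω k ^ 2)) μ := (hintSu k).const_mul _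
    rw [integral_add (hintS2u k) hg1, integral_add hg2 (((hintu2 k).const_mul _)),
      integral_const_mul, integral_const_mul, hESu k, hES2u k, hvar k]
    ring
  -- assemble
  have hsplit : ∫ ω, A ω ^ 2 * (1 + ∑ k, u ω k ^ 2) ∂μ
      = (∫ ω, A ω ^ 2 ∂μ) + ∑ k, ∫ ω, A ω ^ 2 * u ω k ^ 2 ∂μ := by
    simp only [hexpand]
    have hg : Integrable (fun ω => ∑ k, A ω ^ 2 * u ω k ^ 2) μ :=
      integrable_finset_sum _ fun k _ => hintA2u k
    rw [integral_add hintA2 hg, integral_finset_sum _ fun k _ => hintA2u k]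
  rw [hsplit, hEA2]
  simp only [hEA2u]
  rw [Finset.sum_add_distrib, Finset.sum_comm]
  have hrow : ∀ j : Fin d, ∑ k : Fin d, c j ^ 2 * (if j = k then κ else 1)
      = c j ^ 2 * (κ + ((d:ℝ) - 1)) := by
    intro j
    rw [← Finset.mul_sum]
    congr 1
    have : ∀ k : Fin d, (if j = k then κ else (1:ℝ)) = 1 + (if j = k then κ - 1 else 0) := by
      intro k; split <;> ring
    simp only [this]
    rw [Finset.sum_add_distrib, Finset.sum_ite_eq]
    simp [Finset.card_univ]
    ring
  simp only [hrow]
  rw [Finset.sum_const, Finset.card_univ]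
  simp only [Fintype.card_fin, nsmul_eq_mul, ← Finset.sum_mul]
  ring


lemma Tmap_param_apply {d : ℕ} (m : EuclideanSpace ℝ (Fin d)) (C : Matrix (Fin d) (Fin d) ℝ)
    (uu : EuclideanSpace ℝ (Fin d)) (i : Fin d) :
    Tmap (param m C) uu i = (∑ j, C i j * uu j) + m i := rfl

end AuxStmt7

/-- if `f` is `M`-smooth with stationary point `z̄`, `u ∼ s` standardized
with fourth moment `κ`, and `g = ∇_w f(T_w(u))` (gradient with respect to all `d + d²`
parameters `w = (m, C)`), then `E‖g‖₂² ≤ M²((d+1)‖m − z̄‖₂² + (d+κ)‖C‖_F²)`. -/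
theorem stmt_7 {Ω : Type*} [MeasurableSpace Ω] (μ : Measure Ω) [IsProbabilityMeasure μ]
    (d : ℕ) (hd : 0 < d) (u : Ω → EuclideanSpace ℝ (Fin d))
    (hmeas : ∀ i, Measurable fun ω => u ω i)
    (hindep : iIndepFun (fun i ω => u ω i) μ)
    (hident : ∀ i j : Fin d, IdentDistrib (fun ω => u ω i) (fun ω => u ω j) μ μ)
    (hmean : ∀ i, ∫ ω, u ω i ∂μ = 0)
    (hthird : ∀ i, ∫ ω, u ω i ^ 3 ∂μ = 0)
    (hvar : ∀ i, ∫ ω, u ω i ^ 2 ∂μ = 1)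
    (hL4 : ∀ i, MemLp (fun ω => u ω i) 4 μ)
    (κ : ℝ) (hκ : κ = ∫ ω, u ω ⟨0, hd⟩ ^ 4 ∂μ)
    (f : EuclideanSpace ℝ (Fin d) → ℝ) (hf : Differentiable ℝ f)
    (M : ℝ) (hM : 0 ≤ M)
    (hsmooth : ∀ y z : EuclideanSpace ℝ (Fin d),
      ‖gradient f y - gradient f z‖ ≤ M * ‖y - z‖)
    (zbar : EuclideanSpace ℝ (Fin d)) (hstat : gradient f zbar = 0)
    (m : EuclideanSpace ℝ (Fin d)) (C : Matrix (Fin d) (Fin d) ℝ) :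
    ∫ ω, ‖gradient (fun w' => f (Tmap w' (u ω))) (param m C)‖ ^ 2 ∂μ
      ≤ M ^ 2 * (((d : ℝ) + 1) * ‖m - zbar‖ ^ 2 + ((d : ℝ) + κ) * ∑ i, ∑ j, C i j ^ 2) := by
  have hper : ∀ i : Fin d,
      Integrable (fun ω => ((∑ j, C i j * u ω j) + (m i - zbar i))^2 * (1 + ∑ k, u ω k ^2)) μ ∧
      ∫ ω, ((∑ j, C i j * u ω j) + (m i - zbar i))^2 * (1 + ∑ k, u ω k ^2) ∂μ
        = ((d : ℝ)+1) * (m i - zbar i)^2 + ((d : ℝ)+κ) * ∑ j, C i j ^2 :=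
    fun i => per_row hmeas hindep hident hmean hthird hvar hL4 hd κ hκ (C i) (m i - zbar i)
  have hpt : ∀ ω, ‖gradient (fun w' => f (Tmap w' (u ω))) (param m C)‖^2
      ≤ M^2 * ∑ i, (((∑ j, C i j * u ω j) + (m i - zbar i))^2 * (1 + ∑ k, u ω k ^2)) := by
    intro ω
    rw [grad_comp f hf (u ω) (param m C)]
    set y := Tmap (param m C) (u ω) with hy
    have h2 : ‖gradient f y‖ ≤ M * ‖y - zbar‖ := by
      have h := hsmooth y zbar; rwa [hstat, sub_zero] at h
    have h3 : ‖gradient f y‖^2 ≤ M^2 * ‖y - zbar‖^2 := by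
      calc ‖gradient f y‖^2 ≤ (M * ‖y - zbar‖)^2 :=
            pow_le_pow_left₀ (norm_nonneg _) h2 2
        _ = M^2 * ‖y - zbar‖^2 := by ring
    have h4 : ‖y - zbar‖^2 = ∑ i, ((∑ j, C i j * u ω j) + (m i - zbar i))^2 := by
      rw [norm_sq_eucl]
      refine Finset.sum_congr rfl fun i _ => ?_
      have hco : (y - zbar) i = ((∑ j, C i j * u ω j) + m i) - zbar i := by
        have : (y - zbar) i = y i - zbar i := rfl
        rw [this, hy, Tmap_param_apply]
      rw [hco]; ring
    have h5 : (0:ℝ) ≤ 1 + ‖u ω‖^2 := by positivity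
    calc ‖gradient f y‖^2 * (1 + ‖u ω‖^2)
        ≤ (M^2 * ‖y - zbar‖^2) * (1 + ‖u ω‖^2) := mul_le_mul_of_nonneg_right h3 h5
      _ = M^2 * ∑ i, (((∑ j, C i j * u ω j) + (m i - zbar i))^2 * (1 + ∑ k, u ω k ^2)) := by
          rw [h4, norm_sq_eucl (u ω), mul_assoc, Finset.sum_mul]
  have hBint : Integrable (fun ω => M^2 *
      ∑ i, (((∑ j, C i j * u ω j) + (m i - zbar i))^2 * (1 + ∑ k, u ω k ^2))) μ :=
    (integrable_finset_sum _ fun i _ => (hper i).1).const_mul _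
  have hmono := integral_mono_of_nonneg (μ := μ)
    (f := fun ω => ‖gradient (fun w' => f (Tmap w' (u ω))) (param m C)‖^2)
    (ae_of_all _ fun ω => by positivity) hBint (ae_of_all _ hpt)
  refine hmono.trans (le_of_eq ?_)
  rw [integral_const_mul, integral_finset_sum _ fun i _ => (hper i).1]
  have hsum : ∑ i, ∫ ω, ((∑ j, C i j * u ω j) + (m i - zbar i))^2 * (1 + ∑ k, u ω k ^2) ∂μ
      = ∑ i, (((d : ℝ)+1) * (m i - zbar i)^2 + ((d : ℝ)+κ) * ∑ j, C i j ^2) :=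
    Finset.sum_congr rfl fun i _ => (hper i).2
  rw [hsum, Finset.sum_add_distrib, ← Finset.mul_sum, ← Finset.mul_sum]
  have hmsq : ‖m - zbar‖^2 = ∑ i, (m i - zbar i)^2 := by
    rw [norm_sq_eucl]
    exact Finset.sum_congr rfl fun i _ => rfl
  rw [hmsq]
end
end

section
/- Let M ≥ 0 and z̄ ∈ ℝ^d, and let f(z) = (M/2) ‖z − z̄‖₂². Let u ∼ s where s is standardized with fourth moment κ = E[u₁⁴] < ∞, let T_w(u) = Cu + m, and let g = ∇_w f(T_w(u)) with respect to all d + d² parameters w = (m, C). Then E‖g‖₂² = M² ((d+1) ‖m − z̄‖₂² + (d+κ) ‖C‖_F²); in particular, the upper bound E‖g‖₂² ≤ M² ((d+1) ‖m − z̄‖₂² + (d+κ) ‖C‖_F²) for M-smooth f with stationary point z̄ is attained with equality, and is therefore unimprovable. -/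
noncomputable section

open MeasureTheory ProbabilityTheory
open scoped RealInnerProductSpace

section Helpers

variable {Ω : Type*} [MeasurableSpace Ω] {μ : MeasureTheory.Measure Ω} {f g : Ω → ℝ}

def Amap {d : ℕ} (y : EuclideanSpace ℝ (Fin d)) :
    EuclideanSpace ℝ (Fin d ⊕ Fin d × Fin d) →L[ℝ] EuclideanSpace ℝ (Fin d) :=
  LinearMap.toContinuousLinearMap
  { toFun := fun w => (WithLp.equiv 2 _).symm fun i =>
      (∑ j, w (Sum.inr (i, j)) * y j) + w (Sum.inl i)
    map_add' := by
      intro w w'; ext i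
      simp [Finset.sum_add_distrib, add_mul]
      ring
    map_smul' := by
      intro c w; ext i
      simp only [WithLp.equiv_symm_apply, PiLp.toLp_apply, PiLp.smul_apply, smul_eq_mul, RingHom.id_apply]
      rw [mul_add, Finset.mul_sum]
      congr 1
      exact Finset.sum_congr rfl fun _ _ => by ring }

lemma Amap_apply {d : ℕ} (y : EuclideanSpace ℝ (Fin d)) (w : EuclideanSpace ℝ (Fin d ⊕ Fin d × Fin d)) :
    Amap y w = Tmap w y := rfl

lemma hasGradientAt_quad {d : ℕ} (M : ℝ) (zbar y : EuclideanSpace ℝ (Fin d))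
    (w0 : EuclideanSpace ℝ (Fin d ⊕ Fin d × Fin d)) :
    HasGradientAt (fun w => M / 2 * ‖Tmap w y - zbar‖ ^ 2)
      ((WithLp.equiv 2 _).symm (Sum.elim
        (fun i => M * (Tmap w0 y i - zbar i))
        (fun p => M * (Tmap w0 y p.1 - zbar p.1) * y p.2))) w0 := by
  have h1 : HasFDerivAt (fun w : EuclideanSpace ℝ (Fin d ⊕ Fin d × Fin d) =>
      Amap y w - zbar) (Amap y) w0 := (Amap y).hasFDerivAt.sub_const zbar
  have h2 := (h1.inner ℝ h1).const_mul (M / 2)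
  have hfun : (fun w : EuclideanSpace ℝ (Fin d ⊕ Fin d × Fin d) =>
      M / 2 * ⟪Amap y w - zbar, Amap y w - zbar⟫)
      = fun w => M / 2 * ‖Tmap w y - zbar‖ ^ 2 := by
    funext w
    rw [real_inner_self_eq_norm_sq, Amap_apply]
  rw [hfun] at h2
  have h3 := h2.hasGradientAt
  have hL : InnerProductSpace.toDual ℝ (EuclideanSpace ℝ (Fin d ⊕ Fin d × Fin d))
      ((WithLp.equiv 2 _).symm (Sum.elim
        (fun i => M * (Tmap w0 y i - zbar i))
        (fun p => M * (Tmap w0 y p.1 - zbar p.1) * y p.2)))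
      = (M / 2) • (fderivInnerCLM ℝ ((Amap y) w0 - zbar, (Amap y) w0 - zbar)).comp
          ((Amap y).prod (Amap y)) := by
    ext v
    rw [InnerProductSpace.toDual_apply_apply]
    simp only [ContinuousLinearMap.smul_apply, ContinuousLinearMap.coe_comp', Function.comp_apply,
      ContinuousLinearMap.prod_apply, fderivInnerCLM_apply, smul_eq_mul,
      PiLp.inner_apply, RCLike.inner_apply, conj_trivial]
    have hAv : ∀ (w : EuclideanSpace ℝ (Fin d ⊕ Fin d × Fin d)) (i : Fin d),
        Amap y w i = (∑ j, w (Sum.inr (i, j)) * y j) + w (Sum.inl i) := fun w i => rfl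
    have hsub : ∀ i : Fin d, ((Amap y) w0 - zbar) i = Tmap w0 y i - zbar i := by
      intro i
      rw [PiLp.sub_apply, Amap_apply]
    simp only [WithLp.equiv_symm_apply, PiLp.toLp_apply, Fintype.sum_sum_type, Sum.elim_inl, Sum.elim_inr,
      Fintype.sum_prod_type, hAv, hsub]
    simp only [mul_add, add_mul, Finset.sum_add_distrib, Finset.mul_sum, Finset.sum_mul]
    ring_nf
    simp only [← Finset.sum_add_distrib]
    refine Finset.sum_congr rfl fun x _ => ?_
    have hkey : (∑ x_1 : Fin d, M * (1 / 2) * (Tmap w0 y x - zbar x) * v (Sum.inr (x, x_1)) * y x_1)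
        + ∑ x_1 : Fin d, M * (1 / 2) * v (Sum.inr (x, x_1)) * y x_1 * (Tmap w0 y x - zbar x)
        = ∑ x_1 : Fin d, M * (Tmap w0 y x - zbar x) * y x_1 * v (Sum.inr (x, x_1)) := by
      rw [← Finset.sum_add_distrib]
      exact Finset.sum_congr rfl fun j _ => by ring
    linear_combination (norm := skip) -hkey
    ring_nf
    simp only [Finset.sum_sub_distrib]
    ring_nf
    simp only [mul_right_comm _ (y.ofLp _) (v.ofLp _)]
    ring
  convert h3 using 1
  rw [← hL, LinearIsometryEquiv.symm_apply_apply]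

lemma norm_sq_elim {d : ℕ} (F : Fin d → ℝ) (G : Fin d × Fin d → ℝ) :
    ‖((WithLp.equiv 2 _).symm (Sum.elim F G) : EuclideanSpace ℝ (Fin d ⊕ Fin d × Fin d))‖ ^ 2
      = (∑ i, F i ^ 2) + ∑ p, G p ^ 2 := by
  rw [EuclideanSpace.norm_eq, Real.sq_sqrt (by positivity)]
  simp [Fintype.sum_sum_type, Real.norm_eq_abs, sq_abs]

variable {Ω : Type*} [MeasurableSpace Ω] {μ : Measure Ω} {f g : Ω → ℝ}

lemma memL2_of_mul (hf : MemLp f 4 μ) (hg : MemLp g 4 μ) :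
    MemLp (fun ω => f ω * g ω) 2 μ := by
  have h := hg.smul hf (p := 4) (q := 4) (r := 2) (hpqr := by
    constructor
    simp only [← one_div]
    rw [ENNReal.div_add_div_same, ENNReal.div_eq_div_iff] <;> norm_num)
  exact h

lemma integrable_of_L2_mul (hf : MemLp f 2 μ) (hg : MemLp g 2 μ) :
    Integrable (fun ω => f ω * g ω) μ := by
  have h := hg.smul hf (p := 2) (q := 2) (r := 1) (hpqr := by
    constructor
    simp only [← one_div]
    rw [ENNReal.div_add_div_same, ENNReal.div_eq_div_iff] <;> norm_num)
  rw [← memLp_one_iff_integrable]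
  exact h

end Helpers

/-- for the quadratic `f(z) = (M/2)‖z − z̄‖₂²` and `u ∼ s` standardized with
fourth moment `κ`, the estimator `g = ∇_w f(T_w(u))` attains the smooth-case bound with
equality: `E‖g‖₂² = M²((d+1)‖m − z̄‖₂² + (d+κ)‖C‖_F²)`; hence the bound is unimprovable. -/
theorem stmt_9 {Ω : Type*} [MeasurableSpace Ω] (μ : Measure Ω) [IsProbabilityMeasure μ]
    (d : ℕ) (hd : 0 < d) (u : Ω → EuclideanSpace ℝ (Fin d))
    (hmeas : ∀ i, Measurable fun ω => u ω i)
    (hindep : iIndepFun (fun i ω => u ω i) μ)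
    (hident : ∀ i j : Fin d, IdentDistrib (fun ω => u ω i) (fun ω => u ω j) μ μ)
    (hmean : ∀ i, ∫ ω, u ω i ∂μ = 0)
    (hthird : ∀ i, ∫ ω, u ω i ^ 3 ∂μ = 0)
    (hvar : ∀ i, ∫ ω, u ω i ^ 2 ∂μ = 1)
    (hL4 : ∀ i, MemLp (fun ω => u ω i) 4 μ)
    (κ : ℝ) (hκ : κ = ∫ ω, u ω ⟨0, hd⟩ ^ 4 ∂μ)
    (M : ℝ) (hM : 0 ≤ M) (zbar : EuclideanSpace ℝ (Fin d))
    (f : EuclideanSpace ℝ (Fin d) → ℝ) (hf : f = fun z => M / 2 * ‖z - zbar‖ ^ 2)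
    (m : EuclideanSpace ℝ (Fin d)) (C : Matrix (Fin d) (Fin d) ℝ) :
    ∫ ω, ‖gradient (fun w' => f (Tmap w' (u ω))) (param m C)‖ ^ 2 ∂μ
      = M ^ 2 * (((d : ℝ) + 1) * ‖m - zbar‖ ^ 2 + ((d : ℝ) + κ) * ∑ i, ∑ j, C i j ^ 2) := by
  classical
  subst hf
  -- abbreviations
  set a : Fin d → ℝ := fun i => m i - zbar i with ha
  set R : Ω → Fin d → ℝ := fun ω i => (∑ j, C i j * u ω j) + a i with hR
  have hT : ∀ (ω : Ω) (i : Fin d), Tmap (param m C) (u ω) i = (∑ j, C i j * u ω j) + m i := by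
    intro ω i; simp [Tmap, param]
  -- Step 1 : pointwise value of the integrand
  have hpt : ∀ ω, ‖gradient (fun w' => M / 2 * ‖Tmap w' (u ω) - zbar‖ ^ 2) (param m C)‖ ^ 2
      = M ^ 2 * ∑ i, R ω i ^ 2 * (1 + ∑ k, u ω k ^ 2) := by
    intro ω
    rw [(hasGradientAt_quad M zbar (u ω) (param m C)).gradient, norm_sq_elim]
    have hRe : ∀ i, Tmap (param m C) (u ω) i - zbar i = R ω i := by
      intro i; rw [hT, hR]; dsimp; ring
    simp only [hRe, Fintype.sum_prod_type]
    simp only [mul_pow, mul_add, mul_one, Finset.mul_sum, Finset.sum_add_distrib]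
    congr 1
    exact Finset.sum_congr rfl fun i _ => Finset.sum_congr rfl fun j _ => by ring
  -- Step 2 : moment lemmas
  have hms : ∀ i : Fin d, AEStronglyMeasurable (fun ω => u ω i) μ := fun i =>
    (hmeas i).aestronglyMeasurable
  have hm2 : ∀ p q : Fin d, p ≠ q → ∫ ω, u ω p * u ω q ∂μ = 0 := by
    intro p q hpq
    rw [(hindep.indepFun hpq).integral_fun_mul_eq_mul_integral (hms p) (hms q), hmean p, zero_mul]
  have hsq : ∀ p : Fin d, ∫ ω, u ω p * u ω p ∂μ = 1 := by
    intro p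
    rw [show (fun ω => u ω p * u ω p) = fun ω => u ω p ^ 2 from funext fun ω => (pow_two _).symm]
    exact hvar p
  have hm12 : ∀ p q : Fin d, ∫ ω, u ω p * u ω q ^ 2 ∂μ = 0 := by
    intro p q
    by_cases hpq : p = q
    · subst hpq
      rw [show (fun ω => u ω p * u ω p ^ 2) = fun ω => u ω p ^ 3 from funext fun ω => by ring]
      exact hthird p
    · have hI : IndepFun (fun ω => u ω p) (fun ω => u ω q ^ 2) μ :=
        (hindep.indepFun hpq).comp measurable_id (measurable_id.pow_const 2)
      rw [hI.integral_fun_mul_eq_mul_integral (hms p) ((hmeas q).pow_const 2).aestronglyMeasurable, hmean p, zero_mul]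
  have hm4 : ∀ p : Fin d, ∫ ω, u ω p ^ 4 ∂μ = κ := by
    intro p
    have h := ((hident p ⟨0, hd⟩).comp (u := fun x : ℝ => x ^ 4)
      (measurable_id.pow_const 4)).integral_eq
    rw [hκ]; exact h
  have hm22 : ∀ p q : Fin d, p ≠ q → ∫ ω, u ω p ^ 2 * u ω q ^ 2 ∂μ = 1 := by
    intro p q hpq
    have hI : IndepFun (fun ω => u ω p ^ 2) (fun ω => u ω q ^ 2) μ :=
      (hindep.indepFun hpq).comp (measurable_id.pow_const 2) (measurable_id.pow_const 2)
    rw [hI.integral_fun_mul_eq_mul_integral ((hmeas p).pow_const 2).aestronglyMeasurable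
      ((hmeas q).pow_const 2).aestronglyMeasurable, hvar p, hvar q, one_mul]
  have hm112 : ∀ p q k : Fin d, p ≠ q → ∫ ω, u ω p * u ω q * u ω k ^ 2 ∂μ = 0 := by
    intro p q k hpq
    by_cases hkp : k = p
    · subst hkp
      have hI : IndepFun (fun ω => u ω q) (fun ω => u ω k ^ 3) μ :=
        (hindep.indepFun (Ne.symm hpq)).comp measurable_id (measurable_id.pow_const 3)
      rw [show (fun ω => u ω k * u ω q * u ω k ^ 2) = fun ω => u ω q * u ω k ^ 3 from
        funext fun ω => by ring]
      rw [hI.integral_fun_mul_eq_mul_integral (hms q) ((hmeas k).pow_const 3).aestronglyMeasurable, hthird k,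
        mul_zero]
    · by_cases hkq : k = q
      · subst hkq
        have hI : IndepFun (fun ω => u ω p) (fun ω => u ω k ^ 3) μ :=
          (hindep.indepFun hpq).comp measurable_id (measurable_id.pow_const 3)
        rw [show (fun ω => u ω p * u ω k * u ω k ^ 2) = fun ω => u ω p * u ω k ^ 3 from
          funext fun ω => by ring]
        rw [hI.integral_fun_mul_eq_mul_integral (hms p) ((hmeas k).pow_const 3).aestronglyMeasurable, hthird k,
          mul_zero]
      · have hI0 : IndepFun (fun ω => (u ω q, u ω k)) (fun ω => u ω p) μ :=
          hindep.indepFun_prodMk hmeas q k p (Ne.symm hpq) (fun h => hkp h)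
        have hI : IndepFun (fun ω => u ω q * u ω k ^ 2) (fun ω => u ω p) μ :=
          hI0.comp (measurable_fst.mul (measurable_snd.pow_const 2)) measurable_id
        rw [show (fun ω => u ω p * u ω q * u ω k ^ 2) = fun ω => (u ω q * u ω k ^ 2) * u ω p from
          funext fun ω => by ring]
        rw [hI.integral_fun_mul_eq_mul_integral ((hmeas q).mul ((hmeas k).pow_const 2)).aestronglyMeasurable (hms p),
          hmean p, mul_zero]
  -- Step 3 : the option-indexed expansion
  set V : Option (Fin d) → Ω → ℝ := fun o ω => o.elim 1 (fun t => u ω t) with hV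
  set Dc : Fin d → Option (Fin d) → ℝ := fun i o => o.elim (a i) (fun t => C i t) with hDc
  set c : Option (Fin d) → ℝ := fun o => o.elim ((d : ℝ) + 1) (fun _ => (d : ℝ) + κ) with hc
  have hV4 : ∀ o, MemLp (V o) 4 μ := by
    intro o
    cases o with
    | none => simpa [hV] using memLp_const (μ := μ) (1 : ℝ)
    | some t => exact hL4 t
  have hRsum : ∀ ω i, R ω i = ∑ o : Option (Fin d), Dc i o * V o ω := by
    intro ω i
    rw [Fintype.sum_option]
    simp [hV, hDc, hR]
    ring
  have hexp : ∀ ω, (∑ i, R ω i ^ 2 * (1 + ∑ k, u ω k ^ 2))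
      = ∑ i, ∑ o : Option (Fin d), ∑ o' : Option (Fin d),
          Dc i o * Dc i o' * (V o ω * V o' ω * (1 + ∑ k, u ω k ^ 2)) := by
    intro ω
    refine Finset.sum_congr rfl fun i _ => ?_
    rw [hRsum, pow_two, Finset.sum_mul_sum, Finset.sum_mul]
    refine Finset.sum_congr rfl fun o _ => ?_
    rw [Finset.sum_mul]
    exact Finset.sum_congr rfl fun o' _ => by ring
  -- integrability
  have hWint0 : ∀ o o', Integrable (fun ω => V o ω * V o' ω) μ := fun o o' =>
    integrable_of_L2_mul ((hV4 o).mono_exponent (by norm_num))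
      ((hV4 o').mono_exponent (by norm_num))
  have hsq2 : ∀ k : Fin d, MemLp (fun ω => u ω k ^ 2) 2 μ := by
    intro k
    have := memL2_of_mul (hL4 k) (hL4 k)
    simpa [← pow_two] using this
  have hWint1 : ∀ o o' (k : Fin d), Integrable (fun ω => V o ω * V o' ω * u ω k ^ 2) μ := by
    intro o o' k
    exact integrable_of_L2_mul (memL2_of_mul (hV4 o) (hV4 o')) (hsq2 k)
  have hWsplit : ∀ o o', (fun ω => V o ω * V o' ω * (1 + ∑ k, u ω k ^ 2))
      = fun ω => V o ω * V o' ω + ∑ k, V o ω * V o' ω * u ω k ^ 2 := by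
    intro o o'
    funext ω
    rw [mul_add, mul_one, Finset.mul_sum]
  have hWint : ∀ o o', Integrable (fun ω => V o ω * V o' ω * (1 + ∑ k, u ω k ^ 2)) μ := by
    intro o o'
    rw [hWsplit]
    exact (hWint0 o o').add (integrable_finset_sum _ fun k _ => hWint1 o o' k)
  -- value of the W-integrals
  have hWval : ∀ o o', ∫ ω, V o ω * V o' ω * (1 + ∑ k, u ω k ^ 2) ∂μ
      = if o = o' then c o else 0 := by
    intro o o'
    rw [hWsplit, integral_add (hWint0 o o') (integrable_finset_sum _ fun k _ => hWint1 o o' k),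
      integral_finset_sum _ fun k _ => hWint1 o o' k]
    match o, o' with
    | none, none =>
      simp only [hV, hc, Option.elim_none, one_mul, reduceIte]
      rw [integral_const]
      simp only [probReal_univ, measure_univ, ENNReal.toReal_one, smul_eq_mul, mul_one]
      simp only [hvar]
      rw [Finset.sum_const, Finset.card_univ, Fintype.card_fin, nsmul_eq_mul, mul_one]
      ring
    | none, some t =>
      simp only [hV, Option.elim_none, Option.elim_some, one_mul, reduceCtorEq, if_false]
      rw [hmean t]
      simp only [hm12]
      simp
    | some t, none =>
      simp only [hV, Option.elim_none, Option.elim_some, mul_one]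
      rw [hmean t]
      simp only [hm12]
      simp
    | some t, some t' =>
      by_cases h : t = t'
      · subst h
        simp only [hV, hc, Option.elim_some, reduceIte]
        rw [hsq t]
        have hker : ∀ k : Fin d, ∫ ω, u ω t * u ω t * u ω k ^ 2 ∂μ
            = if k = t then κ else 1 := by
          intro k
          by_cases hk : k = t
          · subst hk
            rw [show (fun ω => u ω k * u ω k * u ω k ^ 2) = fun ω => u ω k ^ 4 from
              funext fun ω => by ring, hm4 k]
            simp
          · rw [show (fun ω => u ω t * u ω t * u ω k ^ 2) = fun ω => u ω t ^ 2 * u ω k ^ 2 from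
              funext fun ω => by ring, hm22 t k (fun hh => hk hh.symm)]
            simp [hk]
        simp only [hker]
        have hsum : ∑ k : Fin d, (if k = t then κ else (1:ℝ))
            = (κ - 1) + (d : ℝ) := by
          rw [Finset.sum_congr rfl (fun k _ => show (if k = t then κ else (1:ℝ))
            = (if k = t then κ - 1 else 0) + 1 from by split_ifs <;> ring)]
          rw [Finset.sum_add_distrib, Finset.sum_ite_eq' Finset.univ t fun _ => κ - 1]
          simp [Finset.card_univ]
        rw [hsum]
        ring
      · simp only [hV, Option.elim_some]
        rw [hm2 t t' h]
        simp only [hm112 t t' _ h]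
        simp [h]
  -- Step 4 : put everything together
  have hInt : ∀ (i : Fin d) (o o' : Option (Fin d)),
      Integrable (fun ω => Dc i o * Dc i o' * (V o ω * V o' ω * (1 + ∑ k, u ω k ^ 2))) μ :=
    fun i o o' => (hWint o o').const_mul _
  calc ∫ ω, ‖gradient (fun w' => M / 2 * ‖Tmap w' (u ω) - zbar‖ ^ 2) (param m C)‖ ^ 2 ∂μ
      = ∫ ω, M ^ 2 * ∑ i, ∑ o : Option (Fin d), ∑ o' : Option (Fin d),
          Dc i o * Dc i o' * (V o ω * V o' ω * (1 + ∑ k, u ω k ^ 2)) ∂μ := by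
        refine integral_congr_ae (Filter.Eventually.of_forall fun ω => ?_)
        dsimp only
        rw [hpt ω, hexp ω]
    _ = M ^ 2 * ∑ i, ∑ o : Option (Fin d), ∑ o' : Option (Fin d),
          Dc i o * Dc i o' * (if o = o' then c o else 0) := by
        rw [integral_const_mul]
        congr 1
        rw [integral_finset_sum _ fun i _ => integrable_finset_sum _ fun o _ =>
          integrable_finset_sum _ fun o' _ => hInt i o o']
        refine Finset.sum_congr rfl fun i _ => ?_
        rw [integral_finset_sum _ fun o _ => integrable_finset_sum _ fun o' _ => hInt i o o']
        refine Finset.sum_congr rfl fun o _ => ?_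
        rw [integral_finset_sum _ fun o' _ => hInt i o o']
        refine Finset.sum_congr rfl fun o' _ => ?_
        rw [integral_const_mul, hWval o o']
    _ = M ^ 2 * (((d : ℝ) + 1) * ‖m - zbar‖ ^ 2 + ((d : ℝ) + κ) * ∑ i, ∑ j, C i j ^ 2) := by
        have hnorm : ‖m - zbar‖ ^ 2 = ∑ i, a i ^ 2 := by
          rw [EuclideanSpace.norm_eq, Real.sq_sqrt (by positivity)]
          refine Finset.sum_congr rfl fun i _ => ?_
          simp [ha, Real.norm_eq_abs, sq_abs]
        rw [hnorm]
        congr 1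
        simp only [mul_ite, mul_zero, Finset.sum_ite_eq, Finset.mem_univ, if_true]
        simp only [Fintype.sum_option, hDc, hc, Option.elim_none, Option.elim_some]
        rw [Finset.sum_add_distrib]
        congr 1
        · rw [Finset.mul_sum]
          exact Finset.sum_congr rfl fun i _ => by ring
        · rw [Finset.mul_sum]
          refine Finset.sum_congr rfl fun i _ => ?_
          rw [Finset.mul_sum]
          exact Finset.sum_congr rfl fun t _ => by ring
end
end
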